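/- arXiv:1203.6344 — 3 statements merged into one kernel-verified Lean document; each statement's English description precedes it below -/
import Mathlib

section
/- The number of lower k-run overpartitions of n equals the number of upper k-run overpartitions of n, for all n ≥ 0 and k ≥ 1. -/
open scoped BigOperators
open Real

/-- An overpartition: a multiset of (non-overlined) positive parts together with a
finite set of overlined part sizes (the last occurrence of a part size may be overlined). -/
structure Overpartition where
  parts : Multiset ℕ
  overParts : Finset ℕ
  parts_pos : ∀ p ∈ parts, 0 < p
  over_pos : ∀ p ∈ overParts, 0 < p

/-- The size (sum of all parts) of an overpartition. -/
def Overpartition.size (μ : Overpartition) : ℕ := μ.parts.sum + ∑ p ∈ μ.overParts, p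

/-- The number of parts of an overpartition. -/
def Overpartition.numParts (μ : Overpartition) : ℕ := Multiset.card μ.parts + μ.overParts.card

/-- Lower `k`-run condition: every overlined part lies in a run of exactly `k` consecutive
overlined parts `j+1, …, j+k`, with no part of size `j` (overlined or not) and no overlined
part of size `j+k+1`. -/
def IsLowerKRun (k : ℕ) (μ : Overpartition) : Prop :=
  ∀ m ∈ μ.overParts, ∃ j : ℕ, j + 1 ≤ m ∧ m ≤ j + k ∧
    (∀ i : ℕ, j + 1 ≤ i → i ≤ j + k → i ∈ μ.overParts) ∧
    j ∉ μ.parts ∧ j ∉ μ.overParts ∧ j + k + 1 ∉ μ.overParts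

/-- Upper `k`-run condition: every overlined part lies in a run of overlined parts
`j+1, …, j+k`, with no overlined part of size `j` and no part of any kind of size `j+k+1`. -/
def IsUpperKRun (k : ℕ) (μ : Overpartition) : Prop :=
  ∀ m ∈ μ.overParts, ∃ j : ℕ, j + 1 ≤ m ∧ m ≤ j + k ∧
    (∀ i : ℕ, j + 1 ≤ i → i ≤ j + k → i ∈ μ.overParts) ∧
    j ∉ μ.overParts ∧ j + k + 1 ∉ μ.parts ∧ j + k + 1 ∉ μ.overParts

/-- `p̄ₖ(n)`, the number of lower `k`-run overpartitions of `n`. -/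
noncomputable def lowerKRunCount (k n : ℕ) : ℕ :=
  Nat.card {μ : Overpartition // μ.size = n ∧ IsLowerKRun k μ}

/-- The number of upper `k`-run overpartitions of `n`. -/
noncomputable def upperKRunCount (k n : ℕ) : ℕ :=
  Nat.card {μ : Overpartition // μ.size = n ∧ IsUpperKRun k μ}

/-- `p̄ₖ(ℓ,n)`, the number of upper `k`-run overpartitions of `n` with exactly `ℓ` parts. -/
noncomputable def upperKRunCount2 (k l n : ℕ) : ℕ :=
  Nat.card {μ : Overpartition // μ.size = n ∧ μ.numParts = l ∧ IsUpperKRun k μ}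

/-- The one-variable generating function `Ḡₖ(q)` of lower `k`-run overpartitions. -/
noncomputable def Gbar (k : ℕ) (q : ℂ) : ℂ := ∑' n : ℕ, (lowerKRunCount k n : ℂ) * q ^ n

/-- The two-variable generating function `Ḡₖ(x;q)` of `k`-run overpartitions. -/
noncomputable def Gbar2 (k : ℕ) (x q : ℂ) : ℂ :=
  ∑' p : ℕ × ℕ, (upperKRunCount2 k p.1 p.2 : ℂ) * x ^ p.1 * q ^ p.2

/-- The finite q-Pochhammer symbol `(a;q)ₙ`. -/
def qPoch (a q : ℂ) (n : ℕ) : ℂ := ∏ j ∈ Finset.range n, (1 - a * q ^ j)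

/-- The infinite q-Pochhammer symbol `(a;q)_∞`. -/
noncomputable def qPochInf (a q : ℂ) : ℂ := ∏' j : ℕ, (1 - a * q ^ j)

namespace KRunProof

lemma Overpartition.ext' {μ ν : Overpartition} (h1 : μ.parts = ν.parts)
    (h2 : μ.overParts = ν.overParts) : μ = ν := by cases μ; cases ν; simp_all

/-- block of `s` consecutive integers starting at `a` -/
def blk (a s : ℕ) : Multiset ℕ := (Multiset.range s).map (fun i => a + i)

lemma mem_blk {a s x : ℕ} : x ∈ blk a s ↔ a ≤ x ∧ x < a + s := by
  simp only [blk, Multiset.mem_map, Multiset.mem_range]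
  constructor
  · rintro ⟨i, hi, rfl⟩; omega
  · rintro ⟨h1, h2⟩; exact ⟨x - a, by omega, by omega⟩

lemma count_blk (a s x : ℕ) : (blk a s).count x = if a ≤ x ∧ x < a + s then 1 else 0 := by
  split_ifs with h
  · exact Multiset.count_eq_one_of_mem
      (Multiset.Nodup.map (fun i j hij => by omega) (Multiset.nodup_range s)) (mem_blk.2 h)
  · exact Multiset.count_eq_zero.2 (fun hx => h (mem_blk.1 hx))

lemma blk_succ (a s : ℕ) : blk a (s+1) = (a+s) ::ₘ blk a s := by
  simp [blk, Multiset.range_succ]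

lemma sum_blk_shift (a t s : ℕ) : (blk (a + t) s).sum = (blk a s).sum + s * t := by
  induction s with
  | zero => simp [blk]
  | succ n ih =>
    rw [blk_succ, blk_succ, Multiset.sum_cons, Multiset.sum_cons, ih]
    ring

def jst (O : Finset ℕ) (m : ℕ) : ℕ := Nat.findGreatest (· ∉ O) m

lemma jst_eq {k : ℕ} {O : Finset ℕ} {m j : ℕ} (h1 : j + 1 ≤ m) (h2 : m ≤ j + k)
    (h3 : ∀ i, j + 1 ≤ i → i ≤ j + k → i ∈ O) (h4 : j ∉ O) : jst O m = j :=
  Nat.findGreatest_eq_iff.2 ⟨by omega, fun _ => h4,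
    fun n hlt hle hn => hn (h3 n (by omega) (by omega))⟩

lemma jst_lt {O : Finset ℕ} {m : ℕ} (hm : m ∈ O) (h0 : 0 < m) : jst O m < m := by
  have hle : jst O m ≤ m := Nat.findGreatest_le m
  rcases eq_or_lt_of_le hle with h | h
  · have : m ∉ O := Nat.findGreatest_of_ne_zero (P := (· ∉ O)) h (by omega)
    exact absurd hm this
  · exact h

lemma sigex (P : Multiset ℕ) (b : ℕ) : ∃ s, b + s + 1 ∉ P :=
  ⟨P.sum, fun h => by have := Multiset.le_sum_of_mem h; omega⟩

def sig (P : Multiset ℕ) (b : ℕ) : ℕ := Nat.find (sigex P b)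

lemma sig_not_mem (P : Multiset ℕ) (b : ℕ) : b + sig P b + 1 ∉ P := Nat.find_spec (sigex P b)

lemma sig_mem {P : Multiset ℕ} {b i : ℕ} (h : i < sig P b) : b + i + 1 ∈ P := by
  have := Nat.find_min (sigex P b) h; simpa using this

lemma sig_le {P : Multiset ℕ} {b s : ℕ} (h : b + s + 1 ∉ P) : sig P b ≤ s := Nat.find_min' _ h

def stp (P : Multiset ℕ) (b : ℕ) : ℕ := Nat.findGreatest (· ∉ P) b

lemma stp_le (P : Multiset ℕ) (b : ℕ) : stp P b ≤ b := Nat.findGreatest_le b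

lemma stp_not_mem {P : Multiset ℕ} (h0 : (0:ℕ) ∉ P) (b : ℕ) : stp P b ∉ P :=
  Nat.findGreatest_spec (P := (· ∉ P)) (Nat.zero_le b) h0

lemma stp_mem {P : Multiset ℕ} {b x : ℕ} (h1 : stp P b < x) (h2 : x ≤ b) : x ∈ P := by
  have := Nat.findGreatest_is_greatest (P := (· ∉ P)) h1 h2; simpa using this

lemma le_stp {P : Multiset ℕ} {b x : ℕ} (h1 : x ≤ b) (h2 : x ∉ P) : x ≤ stp P b :=
  Nat.le_findGreatest h1 h2


def runStarts (μ : Overpartition) : Finset ℕ := μ.overParts.image (fun m => jst μ.overParts m)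

lemma mem_runStarts {μ : Overpartition} {j : ℕ} :
    j ∈ runStarts μ ↔ ∃ m ∈ μ.overParts, jst μ.overParts m = j := by simp [runStarts]

variable {k : ℕ} {μ : Overpartition}

/-- common structure of lower and upper k-run overpartitions -/
def GoodRuns (k : ℕ) (μ : Overpartition) : Prop :=
  ∀ m ∈ μ.overParts, jst μ.overParts m + 1 ≤ m ∧ m ≤ jst μ.overParts m + k ∧
    (∀ i, jst μ.overParts m + 1 ≤ i → i ≤ jst μ.overParts m + k → i ∈ μ.overParts) ∧
    jst μ.overParts m ∉ μ.overParts ∧ jst μ.overParts m + k + 1 ∉ μ.overParts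

lemma lower_spec (hL : IsLowerKRun k μ) {m : ℕ} (hm : m ∈ μ.overParts) :
    (jst μ.overParts m + 1 ≤ m ∧ m ≤ jst μ.overParts m + k ∧
      (∀ i, jst μ.overParts m + 1 ≤ i → i ≤ jst μ.overParts m + k → i ∈ μ.overParts) ∧
      jst μ.overParts m ∉ μ.overParts ∧ jst μ.overParts m + k + 1 ∉ μ.overParts) ∧ jst μ.overParts m ∉ μ.parts := by
  obtain ⟨j, h1, h2, h3, h4, h5, h6⟩ := hL m hm
  rw [jst_eq h1 h2 h3 h5]
  exact ⟨⟨h1, h2, h3, h5, h6⟩, h4⟩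

lemma upper_spec (hU : IsUpperKRun k μ) {m : ℕ} (hm : m ∈ μ.overParts) :
    (jst μ.overParts m + 1 ≤ m ∧ m ≤ jst μ.overParts m + k ∧
      (∀ i, jst μ.overParts m + 1 ≤ i → i ≤ jst μ.overParts m + k → i ∈ μ.overParts) ∧
      jst μ.overParts m ∉ μ.overParts ∧ jst μ.overParts m + k + 1 ∉ μ.overParts) ∧
      jst μ.overParts m + k + 1 ∉ μ.parts := by
  obtain ⟨j, h1, h2, h3, h4, h5, h6⟩ := hU m hm
  rw [jst_eq h1 h2 h3 h4]
  exact ⟨⟨h1, h2, h3, h4, h6⟩, h5⟩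

lemma lower_good (hL : IsLowerKRun k μ) : GoodRuns k μ := fun m hm => (lower_spec hL hm).1

lemma upper_good (hU : IsUpperKRun k μ) : GoodRuns k μ := fun m hm => (upper_spec hU hm).1

lemma good_starts (hG : GoodRuns k μ) {j : ℕ} (hj : j ∈ runStarts μ) :
    (∀ i, j + 1 ≤ i → i ≤ j + k → (i ∈ μ.overParts ∧ jst μ.overParts i = j)) ∧
      j ∉ μ.overParts ∧ j + k + 1 ∉ μ.overParts := by
  obtain ⟨m, hm, rfl⟩ := mem_runStarts.1 hj
  obtain ⟨h1, h2, h3, h4, h5⟩ := hG m hm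
  refine ⟨fun i hi1 hi2 => ⟨h3 i hi1 hi2, jst_eq hi1 hi2 h3 h4⟩, h4, h5⟩

lemma good_sep (hG : GoodRuns k μ) {j j' : ℕ} (hj : j ∈ runStarts μ)
    (hj' : j' ∈ runStarts μ) (h : j < j') : j + k + 1 ≤ j' := by
  by_contra h'
  exact (good_starts hG hj').2.1 ((good_starts hG hj).1 j' (by omega) (by omega)).1

lemma good_mem_start (hG : GoodRuns k μ) {m : ℕ} (hm : m ∈ μ.overParts) :
    jst μ.overParts m ∈ runStarts μ := mem_runStarts.2 ⟨m, hm, rfl⟩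

lemma good_over_eq (hG : GoodRuns k μ) :
    μ.overParts = (runStarts μ).biUnion (fun j => Finset.Icc (j+1) (j+k)) := by
  ext m
  simp only [Finset.mem_biUnion, Finset.mem_Icc]
  constructor
  · intro hm
    exact ⟨jst μ.overParts m, good_mem_start hG hm, (hG m hm).1, (hG m hm).2.1⟩
  · rintro ⟨j, hj, h1, h2⟩
    exact ((good_starts hG hj).1 m h1 h2).1

lemma good_sum_over (hG : GoodRuns k μ) (w : ℕ → ℕ) :
    ∑ m ∈ μ.overParts, w (jst μ.overParts m) = ∑ j ∈ runStarts μ, k * w j := by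
  rw [Finset.sum_congr (good_over_eq hG) (fun x _ => rfl), Finset.sum_biUnion]
  · refine Finset.sum_congr rfl (fun j hj => ?_)
    rw [Finset.sum_congr rfl (g := fun _ => w j)
        (fun i hi => by rw [((good_starts hG hj).1 i (Finset.mem_Icc.1 hi).1
          (Finset.mem_Icc.1 hi).2).2]),
      Finset.sum_const, Nat.card_Icc, smul_eq_mul]
    congr 1
    omega
  · intro a ha b hb hab
    simp only [Finset.mem_coe] at ha hb
    rw [Function.onFun, Finset.disjoint_left]
    intro x hxa hxb
    simp only [Finset.mem_Icc] at hxa hxb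
    rcases lt_or_gt_of_ne hab with h | h
    · have := good_sep hG ha hb h; omega
    · have := good_sep hG hb ha h; omega

def Fop (k : ℕ) (μ : Overpartition) : Overpartition where
  parts := μ.parts - (∑ j ∈ runStarts μ, blk (j + k + 1) (sig μ.parts (j + k)))
             + ∑ j ∈ runStarts μ, blk (j + 1) (sig μ.parts (j + k))
  overParts := μ.overParts.image (fun m => m + sig μ.parts (jst μ.overParts m + k))
  parts_pos := by
    intro p hp
    rcases Multiset.mem_add.1 hp with h | h
    · exact μ.parts_pos p (Multiset.mem_of_le (tsub_le_self) h)
    · rcases Multiset.mem_sum.1 h with ⟨j, _, hj⟩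
      have := mem_blk.1 hj; omega
  over_pos := by
    intro p hp
    rcases Finset.mem_image.1 hp with ⟨m, hm, rfl⟩
    have := μ.over_pos m hm; omega

def Gop (k : ℕ) (μ : Overpartition) : Overpartition where
  parts := μ.parts - (∑ j ∈ runStarts μ, blk (stp μ.parts j + 1) (j - stp μ.parts j))
             + ∑ j ∈ runStarts μ, blk (stp μ.parts j + k + 1) (j - stp μ.parts j)
  overParts := μ.overParts.image (fun m => m - (jst μ.overParts m - stp μ.parts (jst μ.overParts m)))
  parts_pos := by
    intro p hp
    rcases Multiset.mem_add.1 hp with h | h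
    · exact μ.parts_pos p (Multiset.mem_of_le (tsub_le_self) h)
    · rcases Multiset.mem_sum.1 h with ⟨j, _, hj⟩
      have := mem_blk.1 hj; omega
  over_pos := by
    intro p hp
    rcases Finset.mem_image.1 hp with ⟨m, hm, rfl⟩
    have h1 := μ.over_pos m hm
    have h2 : jst μ.overParts m < m := jst_lt hm h1
    have h3 := stp_le μ.parts (jst μ.overParts m)
    omega

lemma msum_sum (S : Finset ℕ) (f : ℕ → Multiset ℕ) :
    (∑ j ∈ S, f j).sum = ∑ j ∈ S, (f j).sum :=
  map_sum Multiset.sumAddMonoidHom f S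

lemma lower_start_parts (hL : IsLowerKRun k μ) {j : ℕ} (hj : j ∈ runStarts μ) :
    j ∉ μ.parts := by
  obtain ⟨m, hm, rfl⟩ := mem_runStarts.1 hj
  exact (lower_spec hL hm).2

lemma lower_sep (hL : IsLowerKRun k μ) {j j' : ℕ} (hj : j ∈ runStarts μ)
    (hj' : j' ∈ runStarts μ) (h : j < j') :
    j + k + sig μ.parts (j + k) + 1 ≤ j' := by
  have hk1 : j + k + 1 ≤ j' := good_sep (lower_good hL) hj hj' h
  have hp : j' ∉ μ.parts := lower_start_parts hL hj'
  have hs : sig μ.parts (j + k) ≤ j' - (j + k + 1) := sig_le (by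
    have he : j + k + (j' - (j + k + 1)) + 1 = j' := by omega
    rw [he]; exact hp)
  omega

lemma F_count (k : ℕ) (μ : Overpartition) (x : ℕ) :
    (Fop k μ).parts.count x
      = μ.parts.count x - (∑ j ∈ runStarts μ, (blk (j+k+1) (sig μ.parts (j+k))).count x)
        + ∑ j ∈ runStarts μ, (blk (j+1) (sig μ.parts (j+k))).count x := by
  show (μ.parts - _ + _).count x = _
  rw [Multiset.count_add, Multiset.count_sub, Multiset.count_sum', Multiset.count_sum']

lemma lower_sum_counts (hL : IsLowerKRun k μ) {x j₀ : ℕ} (hj₀ : j₀ ∈ runStarts μ)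
    (h1 : j₀ + 1 ≤ x) (h2 : x ≤ j₀ + k + sig μ.parts (j₀ + k)) :
    (∑ j ∈ runStarts μ, (blk (j+k+1) (sig μ.parts (j+k))).count x)
        = (blk (j₀+k+1) (sig μ.parts (j₀+k))).count x ∧
    (∑ j ∈ runStarts μ, (blk (j+1) (sig μ.parts (j+k))).count x)
        = (blk (j₀+1) (sig μ.parts (j₀+k))).count x := by
  constructor <;>
  · refine Finset.sum_eq_single_of_mem j₀ hj₀ (fun j hj hne => ?_)
    rw [count_blk, if_neg]
    rintro ⟨ha, hb⟩
    rcases lt_or_gt_of_ne hne with h | h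
    · have := lower_sep hL hj hj₀ h; omega
    · have := lower_sep hL hj₀ hj h; omega

lemma lower_count_start (hL : IsLowerKRun k μ) {j₀ : ℕ} (hj₀ : j₀ ∈ runStarts μ) :
    (Fop k μ).parts.count j₀ = 0 := by
  rw [F_count]
  have hc : μ.parts.count j₀ = 0 := Multiset.count_eq_zero.2 (lower_start_parts hL hj₀)
  have ha : (∑ j ∈ runStarts μ, (blk (j+1) (sig μ.parts (j+k))).count j₀) = 0 :=
    Finset.sum_eq_zero (fun j hj => by
      rw [count_blk, if_neg]
      rintro ⟨h1, h2⟩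
      rcases eq_or_ne j j₀ with rfl | hne
      · omega
      · rcases lt_or_gt_of_ne hne with h | h
        · have := lower_sep hL hj hj₀ h; omega
        · have := lower_sep hL hj₀ hj h; omega)
  rw [hc, ha]
  omega

lemma lower_mem_between (hL : IsLowerKRun k μ) {j₀ x : ℕ} (hj₀ : j₀ ∈ runStarts μ)
    (h1 : j₀ + 1 ≤ x) (h2 : x ≤ j₀ + sig μ.parts (j₀ + k)) : x ∈ (Fop k μ).parts := by
  rw [← Multiset.count_pos, F_count, (lower_sum_counts hL hj₀ h1 (by omega)).1,
    (lower_sum_counts hL hj₀ h1 (by omega)).2, count_blk, count_blk]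
  rcases le_or_gt (j₀ + k + 1) x with hx | hx
  · have hcnt : 0 < μ.parts.count x := Multiset.count_pos.2 (by
      have hxeq : x = j₀ + k + (x - j₀ - k - 1) + 1 := by omega
      rw [hxeq]; exact sig_mem (by omega))
    split_ifs <;> omega
  · rw [if_neg (by omega), if_pos ⟨h1, by omega⟩]
    omega

lemma lower_count_top (hL : IsLowerKRun k μ) {j₀ : ℕ} (hj₀ : j₀ ∈ runStarts μ) :
    (Fop k μ).parts.count (j₀ + k + sig μ.parts (j₀ + k) + 1) = 0 := by
  rw [F_count]
  have hc : μ.parts.count (j₀ + k + sig μ.parts (j₀ + k) + 1) = 0 :=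
    Multiset.count_eq_zero.2 (sig_not_mem μ.parts (j₀ + k))
  have ha : (∑ j ∈ runStarts μ,
      (blk (j+1) (sig μ.parts (j+k))).count (j₀ + k + sig μ.parts (j₀ + k) + 1)) = 0 :=
    Finset.sum_eq_zero (fun j hj => by
      rw [count_blk, if_neg]
      rintro ⟨h1, h2⟩
      rcases eq_or_ne j j₀ with rfl | hne
      · omega
      · rcases lt_or_gt_of_ne hne with h | h
        · have := lower_sep hL hj hj₀ h; omega
        · have := lower_sep hL hj₀ hj h; omega)
  rw [hc, ha]
  omega

lemma lower_R_le (hL : IsLowerKRun k μ) :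
    (∑ j ∈ runStarts μ, blk (j+k+1) (sig μ.parts (j+k))) ≤ μ.parts := by
  rw [Multiset.le_iff_count]
  intro x
  by_cases hx : ∃ j₀ ∈ runStarts μ, j₀ + k + 1 ≤ x ∧ x < j₀ + k + 1 + sig μ.parts (j₀ + k)
  · obtain ⟨j₀, hj₀, hx1, hx2⟩ := hx
    rw [Multiset.count_sum', (lower_sum_counts hL hj₀ (by omega) (by omega)).1, count_blk,
      if_pos ⟨hx1, hx2⟩]
    refine Multiset.one_le_count_iff_mem.2 ?_
    have hxeq : x = j₀ + k + (x - j₀ - k - 1) + 1 := by omega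
    rw [hxeq]; exact sig_mem (by omega)
  · push_neg at hx
    rw [Multiset.count_sum', Finset.sum_eq_zero (fun j hj => by
      rw [count_blk, if_neg (fun hc => by have := hx j hj hc.1; omega)])]
    exact Nat.zero_le _

lemma F_over_mem' {x : ℕ} :
    x ∈ (Fop k μ).overParts ↔ ∃ m ∈ μ.overParts, m + sig μ.parts (jst μ.overParts m + k) = x := by
  show x ∈ μ.overParts.image _ ↔ _
  simp [Finset.mem_image]

lemma F_over_char (hL : IsLowerKRun k μ) {x : ℕ} (hx : x ∈ (Fop k μ).overParts) :
    ∃ j₂ ∈ runStarts μ, j₂ + sig μ.parts (j₂+k) + 1 ≤ x ∧ x ≤ j₂ + sig μ.parts (j₂+k) + k := by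
  obtain ⟨m, hm, rfl⟩ := F_over_mem'.1 hx
  obtain ⟨⟨h1, h2, _, _, _⟩, _⟩ := lower_spec hL hm
  exact ⟨jst μ.overParts m, good_mem_start (lower_good hL) hm, by omega, by omega⟩

lemma F_over_mem (hL : IsLowerKRun k μ) {j x : ℕ} (hj : j ∈ runStarts μ)
    (h1 : j + sig μ.parts (j+k) + 1 ≤ x) (h2 : x ≤ j + sig μ.parts (j+k) + k) :
    x ∈ (Fop k μ).overParts := by
  have hy := (good_starts (lower_good hL) hj).1 (x - sig μ.parts (j+k)) (by omega) (by omega)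
  refine F_over_mem'.2 ⟨x - sig μ.parts (j+k), hy.1, ?_⟩
  rw [hy.2]
  omega

lemma F_over_not_mem (hL : IsLowerKRun k μ) {j : ℕ} (hj : j ∈ runStarts μ) :
    j + sig μ.parts (j+k) ∉ (Fop k μ).overParts ∧
    j + sig μ.parts (j+k) + k + 1 ∉ (Fop k μ).overParts := by
  constructor <;>
  · intro hmem
    obtain ⟨j₂, hj₂, hb1, hb2⟩ := F_over_char hL hmem
    rcases eq_or_ne j₂ j with rfl | hne
    · omega
    · rcases lt_or_gt_of_ne hne with h | h
      · have := lower_sep hL hj₂ hj h; omega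
      · have := lower_sep hL hj hj₂ h; omega

theorem F_upper (hL : IsLowerKRun k μ) : IsUpperKRun k (Fop k μ) := by
  intro m' hm'
  obtain ⟨m, hm, rfl⟩ := F_over_mem'.1 hm'
  obtain ⟨⟨h1, h2, _, _, _⟩, _⟩ := lower_spec hL hm
  have hj : jst μ.overParts m ∈ runStarts μ := good_mem_start (lower_good hL) hm
  refine ⟨jst μ.overParts m + sig μ.parts (jst μ.overParts m + k), by omega, by omega,
    fun i hi1 hi2 => F_over_mem hL hj (by omega) (by omega),
    (F_over_not_mem hL hj).1, ?_, ?_⟩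
  · rw [← Multiset.count_eq_zero,
      show jst μ.overParts m + sig μ.parts (jst μ.overParts m + k) + k + 1
        = jst μ.overParts m + k + sig μ.parts (jst μ.overParts m + k) + 1 from by omega]
    exact lower_count_top hL hj
  · exact (F_over_not_mem hL hj).2

lemma lower_mono (hL : IsLowerKRun k μ) {m m' : ℕ} (hm : m ∈ μ.overParts) (hm' : m' ∈ μ.overParts)
    (h : m < m') :
    m + sig μ.parts (jst μ.overParts m + k) < m' + sig μ.parts (jst μ.overParts m' + k) := by
  obtain ⟨⟨h1, h2, _, _, _⟩, _⟩ := lower_spec hL hm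
  obtain ⟨⟨h1', h2', _, _, _⟩, _⟩ := lower_spec hL hm'
  rcases eq_or_ne (jst μ.overParts m) (jst μ.overParts m') with he | hne
  · rw [he]; omega
  · have hlt : jst μ.overParts m < jst μ.overParts m' := by
      by_contra hcon
      have hgt : jst μ.overParts m' < jst μ.overParts m := by omega
      have := good_sep (lower_good hL) (good_mem_start (lower_good hL) hm')
        (good_mem_start (lower_good hL) hm) hgt
      omega
    have := lower_sep hL (good_mem_start (lower_good hL) hm)
      (good_mem_start (lower_good hL) hm') hlt
    omega

theorem F_size (hL : IsLowerKRun k μ) : (Fop k μ).size = μ.size := by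
  have hG := lower_good hL
  have hRle := lower_R_le hL
  have hparts : (Fop k μ).parts.sum =
      μ.parts.sum - (∑ j ∈ runStarts μ, blk (j+k+1) (sig μ.parts (j+k))).sum
        + (∑ j ∈ runStarts μ, blk (j+1) (sig μ.parts (j+k))).sum := by
    show (μ.parts - _ + _).sum = _
    rw [Multiset.sum_add]
    congr 1
    have := congrArg Multiset.sum (tsub_add_cancel_of_le hRle)
    rw [Multiset.sum_add] at this
    omega
  have hRsum : (∑ j ∈ runStarts μ, blk (j+k+1) (sig μ.parts (j+k))).sum
      = (∑ j ∈ runStarts μ, blk (j+1) (sig μ.parts (j+k))).sum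
        + ∑ j ∈ runStarts μ, k * sig μ.parts (j+k) := by
    rw [msum_sum, msum_sum, ← Finset.sum_add_distrib]
    refine Finset.sum_congr rfl (fun j hj => ?_)
    rw [show j + k + 1 = (j + 1) + k from by omega, sum_blk_shift]
    ring
  have hRleSum : (∑ j ∈ runStarts μ, blk (j+k+1) (sig μ.parts (j+k))).sum ≤ μ.parts.sum := by
    have := congrArg Multiset.sum (tsub_add_cancel_of_le hRle)
    rw [Multiset.sum_add] at this
    omega
  have hover : ∑ p ∈ (Fop k μ).overParts, p
      = (∑ p ∈ μ.overParts, p) + ∑ j ∈ runStarts μ, k * sig μ.parts (j+k) := by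
    show ∑ p ∈ μ.overParts.image _, p = _
    rw [Finset.sum_image (fun m hm m' hm' he => by
      by_contra hne
      rcases lt_or_gt_of_ne hne with h | h
      · have := lower_mono hL hm hm' h; omega
      · have := lower_mono hL hm' hm h; omega)]
    rw [Finset.sum_add_distrib, good_sum_over hG (fun j => sig μ.parts (j+k))]
  show (Fop k μ).parts.sum + _ = μ.parts.sum + _
  rw [hparts, hRsum, hover]
  omega

lemma jstF (hL : IsLowerKRun k μ) {m : ℕ} (hm : m ∈ μ.overParts) :
    jst (Fop k μ).overParts (m + sig μ.parts (jst μ.overParts m + k))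
      = jst μ.overParts m + sig μ.parts (jst μ.overParts m + k) := by
  obtain ⟨⟨h1, h2, _, _, _⟩, _⟩ := lower_spec hL hm
  have hj : jst μ.overParts m ∈ runStarts μ := good_mem_start (lower_good hL) hm
  exact jst_eq (k := k) (by omega) (by omega)
    (fun i hi1 hi2 => F_over_mem hL hj (by omega) (by omega))
    (F_over_not_mem hL hj).1

lemma stpF (hL : IsLowerKRun k μ) {j : ℕ} (hj : j ∈ runStarts μ) :
    stp (Fop k μ).parts (j + sig μ.parts (j+k)) = j := by
  refine Nat.findGreatest_eq_iff.2 ⟨by omega, fun _ => ?_, fun n hlt hle hn => ?_⟩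
  · exact Multiset.count_eq_zero.1 (lower_count_start hL hj)
  · exact hn (lower_mem_between hL hj (by omega) (by omega))

lemma G_over_mem' {x : ℕ} :
    x ∈ (Gop k μ).overParts ↔
      ∃ m ∈ μ.overParts, m - (jst μ.overParts m - stp μ.parts (jst μ.overParts m)) = x := by
  show x ∈ μ.overParts.image _ ↔ _
  simp [Finset.mem_image]

lemma comp_GF (hL : IsLowerKRun k μ) : Gop k (Fop k μ) = μ := by
  have hG := lower_good hL
  have hSF : runStarts (Fop k μ) = (runStarts μ).image (fun j => j + sig μ.parts (j+k)) := by
    ext j'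
    simp only [Finset.mem_image]
    constructor
    · intro hj'
      obtain ⟨m', hm', rfl⟩ := mem_runStarts.1 hj'
      obtain ⟨m, hm, rfl⟩ := F_over_mem'.1 hm'
      exact ⟨jst μ.overParts m, good_mem_start hG hm, (jstF hL hm).symm⟩
    · rintro ⟨j, hj, rfl⟩
      obtain ⟨m, hm, rfl⟩ := mem_runStarts.1 hj
      refine mem_runStarts.2 ⟨m + sig μ.parts (jst μ.overParts m + k),
        F_over_mem'.2 ⟨m, hm, rfl⟩, jstF hL hm⟩
  apply Overpartition.ext'
  · -- parts
    show (Fop k μ).parts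
        - (∑ j' ∈ runStarts (Fop k μ), blk (stp (Fop k μ).parts j' + 1) (j' - stp (Fop k μ).parts j'))
        + (∑ j' ∈ runStarts (Fop k μ), blk (stp (Fop k μ).parts j' + k + 1) (j' - stp (Fop k μ).parts j'))
      = μ.parts
    have hinj : ∀ j ∈ runStarts μ, ∀ j' ∈ runStarts μ,
        j + sig μ.parts (j+k) = j' + sig μ.parts (j'+k) → j = j' := by
      intro j hj j' hj' he
      by_contra hne
      rcases lt_or_gt_of_ne hne with h | h
      · have := lower_sep hL hj hj' h; omega
      · have := lower_sep hL hj' hj h; omega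
    have hA : (∑ j' ∈ runStarts (Fop k μ),
        blk (stp (Fop k μ).parts j' + 1) (j' - stp (Fop k μ).parts j'))
        = ∑ j ∈ runStarts μ, blk (j + 1) (sig μ.parts (j+k)) := by
      rw [hSF, Finset.sum_image hinj]
      refine Finset.sum_congr rfl (fun j hj => ?_)
      rw [stpF hL hj]
      congr 1
      omega
    have hR : (∑ j' ∈ runStarts (Fop k μ),
        blk (stp (Fop k μ).parts j' + k + 1) (j' - stp (Fop k μ).parts j'))
        = ∑ j ∈ runStarts μ, blk (j + k + 1) (sig μ.parts (j+k)) := by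
      rw [hSF, Finset.sum_image hinj]
      refine Finset.sum_congr rfl (fun j hj => ?_)
      rw [stpF hL hj]
      congr 1
      omega
    rw [hA, hR]
    have h2 : (Fop k μ).parts = μ.parts
        - (∑ j ∈ runStarts μ, blk (j+k+1) (sig μ.parts (j+k)))
        + ∑ j ∈ runStarts μ, blk (j+1) (sig μ.parts (j+k)) := rfl
    rw [h2, add_tsub_cancel_right, tsub_add_cancel_of_le (lower_R_le hL)]
  · -- over
    ext x
    rw [G_over_mem']
    constructor
    · rintro ⟨m', hm', rfl⟩
      obtain ⟨m, hm, rfl⟩ := F_over_mem'.1 hm'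
      rw [jstF hL hm, stpF hL (good_mem_start hG hm)]
      simpa using hm
    · intro hx
      refine ⟨x + sig μ.parts (jst μ.overParts x + k), F_over_mem'.2 ⟨x, hx, rfl⟩, ?_⟩
      rw [jstF hL hx, stpF hL (good_mem_start hG hx)]
      omega

lemma parts_zero (μ : Overpartition) : (0:ℕ) ∉ μ.parts :=
  fun h => by simpa using μ.parts_pos 0 h

lemma upper_start_parts (hU : IsUpperKRun k μ) {j : ℕ} (hj : j ∈ runStarts μ) :
    j + k + 1 ∉ μ.parts := by
  obtain ⟨m, hm, rfl⟩ := mem_runStarts.1 hj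
  exact (upper_spec hU hm).2

lemma upper_sep (hU : IsUpperKRun k μ) {j j' : ℕ} (hj : j ∈ runStarts μ)
    (hj' : j' ∈ runStarts μ) (h : j < j') : j + k + 1 ≤ stp μ.parts j' :=
  le_stp (good_sep (upper_good hU) hj hj' h) (upper_start_parts hU hj)

lemma G_count (k : ℕ) (μ : Overpartition) (x : ℕ) :
    (Gop k μ).parts.count x
      = μ.parts.count x
        - (∑ j ∈ runStarts μ, (blk (stp μ.parts j + 1) (j - stp μ.parts j)).count x)
        + ∑ j ∈ runStarts μ, (blk (stp μ.parts j + k + 1) (j - stp μ.parts j)).count x := by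
  show (μ.parts - _ + _).count x = _
  rw [Multiset.count_add, Multiset.count_sub, Multiset.count_sum', Multiset.count_sum']

lemma upper_sum_counts (hU : IsUpperKRun k μ) {x j₀ : ℕ} (hj₀ : j₀ ∈ runStarts μ)
    (h1 : stp μ.parts j₀ + 1 ≤ x) (h2 : x ≤ j₀ + k) :
    (∑ j ∈ runStarts μ, (blk (stp μ.parts j + 1) (j - stp μ.parts j)).count x)
        = (blk (stp μ.parts j₀ + 1) (j₀ - stp μ.parts j₀)).count x ∧
    (∑ j ∈ runStarts μ, (blk (stp μ.parts j + k + 1) (j - stp μ.parts j)).count x)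
        = (blk (stp μ.parts j₀ + k + 1) (j₀ - stp μ.parts j₀)).count x := by
  constructor <;>
  · refine Finset.sum_eq_single_of_mem j₀ hj₀ (fun j hj hne => ?_)
    rw [count_blk, if_neg]
    rintro ⟨ha, hb⟩
    have hsl := stp_le μ.parts j
    have hsl0 := stp_le μ.parts j₀
    rcases lt_or_gt_of_ne hne with h | h
    · have := upper_sep hU hj hj₀ h; omega
    · have := upper_sep hU hj₀ hj h; omega

lemma upper_count_stp (hU : IsUpperKRun k μ) {j₀ : ℕ} (hj₀ : j₀ ∈ runStarts μ) :
    (Gop k μ).parts.count (stp μ.parts j₀) = 0 := by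
  rw [G_count]
  have hc : μ.parts.count (stp μ.parts j₀) = 0 :=
    Multiset.count_eq_zero.2 (stp_not_mem (parts_zero μ) j₀)
  have hr : (∑ j ∈ runStarts μ,
      (blk (stp μ.parts j + k + 1) (j - stp μ.parts j)).count (stp μ.parts j₀)) = 0 :=
    Finset.sum_eq_zero (fun j hj => by
      rw [count_blk, if_neg]
      rintro ⟨ha, hb⟩
      have hsl := stp_le μ.parts j
      have hsl0 := stp_le μ.parts j₀
      rcases eq_or_ne j j₀ with rfl | hne
      · omega
      · rcases lt_or_gt_of_ne hne with h | h
        · have := upper_sep hU hj hj₀ h; omega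
        · have := upper_sep hU hj₀ hj h; omega)
  rw [hc, hr]
  omega

lemma upper_mem_between (hU : IsUpperKRun k μ) {j₀ x : ℕ} (hj₀ : j₀ ∈ runStarts μ)
    (h1 : stp μ.parts j₀ + k + 1 ≤ x) (h2 : x ≤ j₀ + k) : x ∈ (Gop k μ).parts := by
  have hsl0 := stp_le μ.parts j₀
  rw [← Multiset.count_pos, G_count, (upper_sum_counts hU hj₀ (by omega) h2).1,
    (upper_sum_counts hU hj₀ (by omega) h2).2, count_blk, count_blk]
  rcases le_or_gt x j₀ with hx | hx
  · have hcnt : 0 < μ.parts.count x := Multiset.count_pos.2 (stp_mem (by omega) hx)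
    split_ifs <;> omega
  · rw [if_neg (by omega), if_pos ⟨h1, by omega⟩]
    omega

lemma upper_count_top (hU : IsUpperKRun k μ) {j₀ : ℕ} (hj₀ : j₀ ∈ runStarts μ) :
    (Gop k μ).parts.count (j₀ + k + 1) = 0 := by
  rw [G_count]
  have hc : μ.parts.count (j₀ + k + 1) = 0 :=
    Multiset.count_eq_zero.2 (upper_start_parts hU hj₀)
  have hr : (∑ j ∈ runStarts μ,
      (blk (stp μ.parts j + k + 1) (j - stp μ.parts j)).count (j₀ + k + 1)) = 0 :=
    Finset.sum_eq_zero (fun j hj => by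
      rw [count_blk, if_neg]
      rintro ⟨ha, hb⟩
      have hsl := stp_le μ.parts j
      have hsl0 := stp_le μ.parts j₀
      rcases eq_or_ne j j₀ with rfl | hne
      · omega
      · rcases lt_or_gt_of_ne hne with h | h
        · have := upper_sep hU hj hj₀ h; omega
        · have := upper_sep hU hj₀ hj h; omega)
  rw [hc, hr]
  omega

lemma upper_A_le (hU : IsUpperKRun k μ) :
    (∑ j ∈ runStarts μ, blk (stp μ.parts j + 1) (j - stp μ.parts j)) ≤ μ.parts := by
  rw [Multiset.le_iff_count]
  intro x
  by_cases hx : ∃ j₀ ∈ runStarts μ,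
      stp μ.parts j₀ + 1 ≤ x ∧ x < stp μ.parts j₀ + 1 + (j₀ - stp μ.parts j₀)
  · obtain ⟨j₀, hj₀, hx1, hx2⟩ := hx
    have hsl0 := stp_le μ.parts j₀
    rw [Multiset.count_sum', (upper_sum_counts hU hj₀ hx1 (by omega)).1, count_blk,
      if_pos ⟨hx1, hx2⟩]
    exact Multiset.one_le_count_iff_mem.2 (stp_mem (b := j₀) (by omega) (by omega))
  · push_neg at hx
    rw [Multiset.count_sum', Finset.sum_eq_zero (fun j hj => by
      rw [count_blk, if_neg (fun hc => by have := hx j hj hc.1; omega)])]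
    exact Nat.zero_le _

lemma G_over_char (hU : IsUpperKRun k μ) {x : ℕ} (hx : x ∈ (Gop k μ).overParts) :
    ∃ j₂ ∈ runStarts μ, stp μ.parts j₂ + 1 ≤ x ∧ x ≤ stp μ.parts j₂ + k := by
  obtain ⟨m, hm, rfl⟩ := G_over_mem'.1 hx
  obtain ⟨⟨h1, h2, _, _, _⟩, _⟩ := upper_spec hU hm
  have hsl := stp_le μ.parts (jst μ.overParts m)
  exact ⟨jst μ.overParts m, good_mem_start (upper_good hU) hm, by omega, by omega⟩

lemma G_over_mem (hU : IsUpperKRun k μ) {j x : ℕ} (hj : j ∈ runStarts μ)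
    (h1 : stp μ.parts j + 1 ≤ x) (h2 : x ≤ stp μ.parts j + k) :
    x ∈ (Gop k μ).overParts := by
  have hsl := stp_le μ.parts j
  have hy := (good_starts (upper_good hU) hj).1 (x + (j - stp μ.parts j)) (by omega) (by omega)
  refine G_over_mem'.2 ⟨x + (j - stp μ.parts j), hy.1, ?_⟩
  rw [hy.2]
  omega

lemma G_over_not_mem (hU : IsUpperKRun k μ) {j : ℕ} (hj : j ∈ runStarts μ) :
    stp μ.parts j ∉ (Gop k μ).overParts ∧ stp μ.parts j + k + 1 ∉ (Gop k μ).overParts := by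
  have hsl := stp_le μ.parts j
  constructor <;>
  · intro hmem
    obtain ⟨j₂, hj₂, hb1, hb2⟩ := G_over_char hU hmem
    have hsl2 := stp_le μ.parts j₂
    rcases eq_or_ne j₂ j with rfl | hne
    · omega
    · rcases lt_or_gt_of_ne hne with h | h
      · have := upper_sep hU hj₂ hj h; omega
      · have := upper_sep hU hj hj₂ h; omega

theorem G_lower (hU : IsUpperKRun k μ) : IsLowerKRun k (Gop k μ) := by
  intro m' hm'
  obtain ⟨m, hm, rfl⟩ := G_over_mem'.1 hm'
  obtain ⟨⟨h1, h2, _, _, _⟩, _⟩ := upper_spec hU hm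
  have hj : jst μ.overParts m ∈ runStarts μ := good_mem_start (upper_good hU) hm
  have hsl := stp_le μ.parts (jst μ.overParts m)
  refine ⟨stp μ.parts (jst μ.overParts m), by omega, by omega,
    fun i hi1 hi2 => G_over_mem hU hj (by omega) (by omega), ?_,
    (G_over_not_mem hU hj).1, (G_over_not_mem hU hj).2⟩
  rw [← Multiset.count_eq_zero]
  exact upper_count_stp hU hj

lemma upper_mono (hU : IsUpperKRun k μ) {m m' : ℕ} (hm : m ∈ μ.overParts) (hm' : m' ∈ μ.overParts)
    (h : m < m') :
    m - (jst μ.overParts m - stp μ.parts (jst μ.overParts m))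
      < m' - (jst μ.overParts m' - stp μ.parts (jst μ.overParts m')) := by
  obtain ⟨⟨h1, h2, _, _, _⟩, _⟩ := upper_spec hU hm
  obtain ⟨⟨h1', h2', _, _, _⟩, _⟩ := upper_spec hU hm'
  have hsl := stp_le μ.parts (jst μ.overParts m)
  have hsl' := stp_le μ.parts (jst μ.overParts m')
  rcases eq_or_ne (jst μ.overParts m) (jst μ.overParts m') with he | hne
  · rw [he]; omega
  · have hlt : jst μ.overParts m < jst μ.overParts m' := by
      by_contra hcon
      have hgt : jst μ.overParts m' < jst μ.overParts m := by omega
      have := good_sep (upper_good hU) (good_mem_start (upper_good hU) hm')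
        (good_mem_start (upper_good hU) hm) hgt
      omega
    have := upper_sep hU (good_mem_start (upper_good hU) hm)
      (good_mem_start (upper_good hU) hm') hlt
    omega

theorem G_size (hU : IsUpperKRun k μ) : (Gop k μ).size = μ.size := by
  have hG := upper_good hU
  have hAle := upper_A_le hU
  have hparts : (Gop k μ).parts.sum =
      μ.parts.sum - (∑ j ∈ runStarts μ, blk (stp μ.parts j + 1) (j - stp μ.parts j)).sum
        + (∑ j ∈ runStarts μ, blk (stp μ.parts j + k + 1) (j - stp μ.parts j)).sum := by
    show (μ.parts - _ + _).sum = _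
    rw [Multiset.sum_add]
    congr 1
    have := congrArg Multiset.sum (tsub_add_cancel_of_le hAle)
    rw [Multiset.sum_add] at this
    omega
  have hRsum : (∑ j ∈ runStarts μ, blk (stp μ.parts j + k + 1) (j - stp μ.parts j)).sum
      = (∑ j ∈ runStarts μ, blk (stp μ.parts j + 1) (j - stp μ.parts j)).sum
        + ∑ j ∈ runStarts μ, k * (j - stp μ.parts j) := by
    rw [msum_sum, msum_sum, ← Finset.sum_add_distrib]
    refine Finset.sum_congr rfl (fun j hj => ?_)
    rw [show stp μ.parts j + k + 1 = (stp μ.parts j + 1) + k from by omega, sum_blk_shift]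
    ring
  have hAleSum : (∑ j ∈ runStarts μ, blk (stp μ.parts j + 1) (j - stp μ.parts j)).sum
      ≤ μ.parts.sum := by
    have := congrArg Multiset.sum (tsub_add_cancel_of_le hAle)
    rw [Multiset.sum_add] at this
    omega
  have hover : (∑ p ∈ (Gop k μ).overParts, p) + (∑ j ∈ runStarts μ, k * (j - stp μ.parts j))
      = ∑ p ∈ μ.overParts, p := by
    show (∑ p ∈ μ.overParts.image _, p) + _ = _
    rw [Finset.sum_image (fun m hm m' hm' he => by
      by_contra hne
      rcases lt_or_gt_of_ne hne with h | h
      · have := upper_mono hU hm hm' h; omega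
      · have := upper_mono hU hm' hm h; omega),
      ← good_sum_over hG (fun j => j - stp μ.parts j), ← Finset.sum_add_distrib]
    refine Finset.sum_congr rfl (fun m hm => ?_)
    have h1 := (upper_spec hU hm).1.1
    have hsl := stp_le μ.parts (jst μ.overParts m)
    omega
  show (Gop k μ).parts.sum + _ = μ.parts.sum + _
  rw [hparts, hRsum, ← hover]
  omega

lemma jstG (hU : IsUpperKRun k μ) {m : ℕ} (hm : m ∈ μ.overParts) :
    jst (Gop k μ).overParts (m - (jst μ.overParts m - stp μ.parts (jst μ.overParts m)))
      = stp μ.parts (jst μ.overParts m) := by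
  obtain ⟨⟨h1, h2, _, _, _⟩, _⟩ := upper_spec hU hm
  have hj : jst μ.overParts m ∈ runStarts μ := good_mem_start (upper_good hU) hm
  have hsl := stp_le μ.parts (jst μ.overParts m)
  exact jst_eq (k := k) (by omega) (by omega)
    (fun i hi1 hi2 => G_over_mem hU hj (by omega) (by omega))
    (G_over_not_mem hU hj).1

lemma sigG (hU : IsUpperKRun k μ) {j : ℕ} (hj : j ∈ runStarts μ) :
    sig (Gop k μ).parts (stp μ.parts j + k) = j - stp μ.parts j := by
  have hsl := stp_le μ.parts j
  have h1 : sig (Gop k μ).parts (stp μ.parts j + k) ≤ j - stp μ.parts j := by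
    refine sig_le ?_
    rw [show stp μ.parts j + k + (j - stp μ.parts j) + 1 = j + k + 1 from by omega,
      ← Multiset.count_eq_zero]
    exact upper_count_top hU hj
  have h2 : ¬ sig (Gop k μ).parts (stp μ.parts j + k) < j - stp μ.parts j := fun hlt =>
    (sig_not_mem (Gop k μ).parts (stp μ.parts j + k))
      (upper_mem_between hU hj (by omega) (by omega))
  omega

lemma comp_FG (hU : IsUpperKRun k μ) : Fop k (Gop k μ) = μ := by
  have hG := upper_good hU
  have hSG : runStarts (Gop k μ) = (runStarts μ).image (fun j => stp μ.parts j) := by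
    ext j'
    simp only [Finset.mem_image]
    constructor
    · intro hj'
      obtain ⟨m', hm', rfl⟩ := mem_runStarts.1 hj'
      obtain ⟨m, hm, rfl⟩ := G_over_mem'.1 hm'
      exact ⟨jst μ.overParts m, good_mem_start hG hm, (jstG hU hm).symm⟩
    · rintro ⟨j, hj, rfl⟩
      obtain ⟨m, hm, rfl⟩ := mem_runStarts.1 hj
      exact mem_runStarts.2 ⟨m - (jst μ.overParts m - stp μ.parts (jst μ.overParts m)),
        G_over_mem'.2 ⟨m, hm, rfl⟩, jstG hU hm⟩
  have hinj : ∀ j ∈ runStarts μ, ∀ j' ∈ runStarts μ,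
      stp μ.parts j = stp μ.parts j' → j = j' := by
    intro j hj j' hj' he
    by_contra hne
    have hsl := stp_le μ.parts j
    have hsl' := stp_le μ.parts j'
    rcases lt_or_gt_of_ne hne with h | h
    · have := upper_sep hU hj hj' h; omega
    · have := upper_sep hU hj' hj h; omega
  apply Overpartition.ext'
  · show (Gop k μ).parts
        - (∑ j' ∈ runStarts (Gop k μ), blk (j' + k + 1) (sig (Gop k μ).parts (j' + k)))
        + (∑ j' ∈ runStarts (Gop k μ), blk (j' + 1) (sig (Gop k μ).parts (j' + k)))
      = μ.parts
    have hR : (∑ j' ∈ runStarts (Gop k μ), blk (j' + k + 1) (sig (Gop k μ).parts (j' + k)))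
        = ∑ j ∈ runStarts μ, blk (stp μ.parts j + k + 1) (j - stp μ.parts j) := by
      rw [hSG, Finset.sum_image hinj]
      refine Finset.sum_congr rfl (fun j hj => ?_)
      rw [sigG hU hj]
    have hA : (∑ j' ∈ runStarts (Gop k μ), blk (j' + 1) (sig (Gop k μ).parts (j' + k)))
        = ∑ j ∈ runStarts μ, blk (stp μ.parts j + 1) (j - stp μ.parts j) := by
      rw [hSG, Finset.sum_image hinj]
      refine Finset.sum_congr rfl (fun j hj => ?_)
      rw [sigG hU hj]
    rw [hR, hA]
    have h2 : (Gop k μ).parts = μ.parts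
        - (∑ j ∈ runStarts μ, blk (stp μ.parts j + 1) (j - stp μ.parts j))
        + ∑ j ∈ runStarts μ, blk (stp μ.parts j + k + 1) (j - stp μ.parts j) := rfl
    rw [h2, add_tsub_cancel_right, tsub_add_cancel_of_le (upper_A_le hU)]
  · ext x
    rw [F_over_mem']
    constructor
    · rintro ⟨m', hm', rfl⟩
      obtain ⟨m, hm, rfl⟩ := G_over_mem'.1 hm'
      rw [jstG hU hm, sigG hU (good_mem_start hG hm)]
      have h1 := (upper_spec hU hm).1.1
      have hsl := stp_le μ.parts (jst μ.overParts m)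
      rw [show m - (jst μ.overParts m - stp μ.parts (jst μ.overParts m))
        + (jst μ.overParts m - stp μ.parts (jst μ.overParts m)) = m from by omega]
      exact hm
    · intro hx
      refine ⟨x - (jst μ.overParts x - stp μ.parts (jst μ.overParts x)),
        G_over_mem'.2 ⟨x, hx, rfl⟩, ?_⟩
      rw [jstG hU hx, sigG hU (good_mem_start hG hx)]
      have h1 := (upper_spec hU hx).1.1
      have hsl := stp_le μ.parts (jst μ.overParts x)
      omega

theorem main_card (n k : ℕ) :
    Nat.card {μ : Overpartition // μ.size = n ∧ IsLowerKRun k μ}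
      = Nat.card {μ : Overpartition // μ.size = n ∧ IsUpperKRun k μ} := by
  apply Nat.card_congr
  exact {
    toFun := fun μ => ⟨Fop k μ.1, by rw [F_size μ.2.2]; exact μ.2.1, F_upper μ.2.2⟩
    invFun := fun μ => ⟨Gop k μ.1, by rw [G_size μ.2.2]; exact μ.2.1, G_lower μ.2.2⟩
    left_inv := fun μ => Subtype.ext (comp_GF μ.2.2)
    right_inv := fun μ => Subtype.ext (comp_FG μ.2.2) }

end KRunProof

/-- The number of lower k-run overpartitions of n equals the number of upper k-run
overpartitions of n, for all n ≥ 0 and k ≥ 1. -/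
theorem lower_eq_upper (n k : ℕ) (hk : 1 ≤ k) :
    lowerKRunCount k n = upperKRunCount k n := by
  unfold lowerKRunCount upperKRunCount
  exact KRunProof.main_card n k
end

section
/- The function f(u) = −2π²u²/(k(k+1)) + Li₂(e^{2πiu})/(k(k+1)) has a critical point at u = w := (i log 2)/(2π), where f(w) = π²/(12k(k+1)) and f''(w) = −8π²/(k(k+1)). -/
open Real

/-- The classical dilogarithm Li₂(z) = Σ_{n≥1} zⁿ/n² on the unit disk. -/
noncomputable def dilogC (z : ℂ) : ℂ := ∑' n : ℕ, z ^ (n + 1) / ((n : ℂ) + 1) ^ 2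

noncomputable def dilogR (x : ℝ) : ℝ := ∑' n : ℕ, x ^ (n + 1) / ((n : ℝ) + 1) ^ 2

lemma dilogR_def : dilogR = fun x => ∑' n : ℕ, x ^ (n + 1) / ((n : ℝ) + 1) ^ 2 := rfl


lemma summable_inv_sq' : Summable (fun n : ℕ => 1 / ((n : ℝ) + 1) ^ 2) := by
  have h : Summable (fun n : ℕ => 1 / (n : ℝ) ^ 2) := summable_one_div_nat_pow.mpr one_lt_two
  have := (summable_nat_add_iff 1).mpr h
  refine this.congr fun n => ?_
  push_cast
  ring_nf

lemma dilogR_summable {x : ℝ} (hx : |x| ≤ 1) :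
    Summable (fun n : ℕ => x ^ (n + 1) / ((n : ℝ) + 1) ^ 2) := by
  refine Summable.of_norm_bounded summable_inv_sq' fun n => ?_
  rw [norm_div, norm_pow, Real.norm_eq_abs, Real.norm_eq_abs,
    abs_of_nonneg (by positivity : (0:ℝ) ≤ ((n:ℝ)+1)^2)]
  apply div_le_div_of_nonneg_right (pow_le_one₀ (abs_nonneg x) hx)
  positivity

lemma dilogR_hasSum {x : ℝ} (hx : |x| ≤ 1) :
    HasSum (fun n : ℕ => x ^ (n + 1) / ((n : ℝ) + 1) ^ 2) (dilogR x) :=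
  (dilogR_summable hx).hasSum

lemma dilogR_zero : dilogR 0 = 0 := by
  simp [dilogR]

lemma dilogR_one : dilogR 1 = π ^ 2 / 6 := by
  have h := hasSum_zeta_two
  have h2 := (hasSum_nat_add_iff' (f := fun n : ℕ => (1:ℝ) / (n:ℝ)^2) 1).mpr h
  simp only [Finset.range_one, Finset.sum_singleton, Nat.cast_zero] at h2
  norm_num at h2
  have h3 : HasSum (fun n : ℕ => (1:ℝ) ^ (n+1) / ((n : ℝ) + 1) ^ 2) (π ^ 2 / 6) := by
    refine h2.congr fun n => ?_
    push_cast
    norm_num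
  exact h3.tsum_eq

lemma dilogR_continuousOn : ContinuousOn dilogR (Set.Icc (-1 : ℝ) 1) := by
  have H : TendstoUniformlyOn
      (fun N x => ∑ n ∈ Finset.range N, x ^ (n + 1) / ((n : ℝ) + 1) ^ 2)
      (fun x => ∑' n : ℕ, x ^ (n + 1) / ((n : ℝ) + 1) ^ 2) Filter.atTop
      (Set.Icc (-1 : ℝ) 1) := by
    refine tendstoUniformlyOn_tsum_nat (f := fun (n : ℕ) (x : ℝ) => x ^ (n + 1) / ((n : ℝ) + 1) ^ 2) (u := fun n : ℕ => 1 / ((n:ℝ)+1)^2) summable_inv_sq' fun n x hx => ?_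
    rw [norm_div, norm_pow, Real.norm_eq_abs, Real.norm_eq_abs,
      abs_of_nonneg (by positivity : (0:ℝ) ≤ ((n:ℝ)+1)^2)]
    have hx1 : |x| ≤ 1 := abs_le.mpr ⟨hx.1, hx.2⟩
    apply div_le_div_of_nonneg_right (pow_le_one₀ (abs_nonneg x) hx1)
    positivity
  exact H.continuousOn (Filter.Frequently.of_forall fun N =>
    (continuous_finset_sum _ fun i _ => by fun_prop).continuousOn)

lemma dilogR_hasDerivAt {x : ℝ} (hx0 : 0 < x) (hx1 : x < 1) :
    HasDerivAt dilogR (-Real.log (1 - x) / x) x := by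
  set r : ℝ := (1 + x) / 2 with hr
  have hr0 : 0 < r := by positivity
  have hr1 : r < 1 := by simp only [hr]; linarith
  have hxr : x < r := by simp only [hr]; linarith
  have key : HasDerivAt (fun y : ℝ => ∑' n : ℕ, y ^ (n + 1) / ((n : ℝ) + 1) ^ 2)
      (∑' n : ℕ, x ^ n / ((n : ℝ) + 1)) x := by
    refine hasDerivAt_tsum_of_isPreconnected
      (u := fun n : ℕ => r ^ n)
      (summable_geometric_of_lt_one hr0.le hr1) isOpen_Ioo
      ((convex_Ioo (-r) r).isPreconnected)
      (g := fun n y => y ^ (n + 1) / ((n : ℝ) + 1) ^ 2)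
      (g' := fun n y => y ^ n / ((n : ℝ) + 1))
      (fun n y _ => ?_) (fun n y hy => ?_) (show x ∈ Set.Ioo (-r) r from ⟨by linarith, hxr⟩)
      (dilogR_summable (by rw [abs_of_nonneg hx0.le]; linarith))
      (show x ∈ Set.Ioo (-r) r from ⟨by linarith, hxr⟩)
    · have h := (hasDerivAt_pow (n + 1) y).div_const (((n : ℝ) + 1) ^ 2)
      have hn : ((n : ℝ) + 1) ≠ 0 := by positivity
      refine h.congr_deriv ?_
      push_cast
      field_simp
    · have hy' : |y| ≤ r := le_of_lt (abs_lt.mpr ⟨hy.1, hy.2⟩)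
      calc ‖y ^ n / ((n : ℝ) + 1)‖ = |y| ^ n / ((n:ℝ)+1) := by
            rw [norm_div, norm_pow, Real.norm_eq_abs, Real.norm_eq_abs,
              abs_of_nonneg (by positivity : (0:ℝ) ≤ (n:ℝ)+1)]
        _ ≤ |y| ^ n := div_le_self (by positivity) (by simp)
        _ ≤ r ^ n := pow_le_pow_left₀ (abs_nonneg y) hy' n
  have hsum : HasSum (fun n : ℕ => x ^ n / ((n : ℝ) + 1)) (-Real.log (1 - x) / x) := by
    have h := hasSum_pow_div_log_of_abs_lt_one (x := x) (by rw [abs_of_nonneg hx0.le]; exact hx1)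
    have h2 := h.div_const x
    have heq : (fun i : ℕ => x ^ (i + 1) / ((i:ℝ) + 1) / x) = fun n : ℕ => x ^ n / ((n:ℝ) + 1) := by
      funext n
      rw [pow_succ]
      field_simp
    rwa [heq] at h2
  rw [hsum.tsum_eq] at key
  exact key


lemma psi_hasDerivAt {y : ℝ} (hy : y ∈ Set.Ioo (0:ℝ) 1) :
    HasDerivAt (fun x => dilogR x + dilogR (1 - x) + Real.log x * Real.log (1 - x)) 0 y := by
  obtain ⟨hy0, hy1⟩ := hy
  have h1y : 0 < 1 - y := by linarith
  have h1 := dilogR_hasDerivAt hy0 hy1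
  have hinner : HasDerivAt (fun x : ℝ => 1 - x) (-1) y := (hasDerivAt_id y).const_sub 1
  have h2 : HasDerivAt (fun x => dilogR (1 - x))
      ((-Real.log (1 - (1 - y)) / (1 - y)) * (-1)) y :=
    (dilogR_hasDerivAt h1y (by linarith)).comp y hinner
  rw [show (1:ℝ) - (1 - y) = y by ring] at h2
  have h3 : HasDerivAt (fun x => Real.log x * Real.log (1 - x))
      (y⁻¹ * Real.log (1 - y) + Real.log y * ((1 - y)⁻¹ * (-1))) y :=
    (Real.hasDerivAt_log hy0.ne').mul ((Real.hasDerivAt_log h1y.ne').comp y hinner)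
  have h := (h1.add h2).add h3
  refine h.congr_deriv ?_
  field_simp
  ring

lemma psi_const {x : ℝ} (hx : x ∈ Set.Ioo (0:ℝ) 1) :
    dilogR x + dilogR (1 - x) + Real.log x * Real.log (1 - x) = π ^ 2 / 6 := by
  set ψ : ℝ → ℝ := fun x => dilogR x + dilogR (1 - x) + Real.log x * Real.log (1 - x) with hψ
  have hconst : ∀ y ∈ Set.Ioo (0:ℝ) 1, ψ y = ψ x := by
    intro y hy
    refine (convex_Ioo (0:ℝ) 1).is_const_of_fderivWithin_eq_zero
      (fun z hz => (psi_hasDerivAt hz).differentiableAt.differentiableWithinAt)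
      (fun z hz => ?_) hy hx
    rw [fderivWithin_of_isOpen isOpen_Ioo hz]
    have := (psi_hasDerivAt hz).hasFDerivAt.fderiv
    rw [this]
    ext v
    simp
  -- limit as x → 1⁻ along Ioo 0 1
  have hne : (nhdsWithin (1:ℝ) (Set.Ioo (0:ℝ) 1)).NeBot := right_nhdsWithin_Ioo_neBot one_pos
  have hlim : Filter.Tendsto ψ (nhdsWithin 1 (Set.Ioo (0:ℝ) 1)) (nhds (π ^ 2 / 6)) := by
    have t1 : Filter.Tendsto dilogR (nhdsWithin 1 (Set.Ioo (0:ℝ) 1)) (nhds (π ^ 2 / 6)) := by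
      have := (dilogR_continuousOn 1 (by norm_num)).tendsto
      rw [dilogR_one] at this
      exact this.mono_left (nhdsWithin_mono 1 (fun z hz => ⟨by linarith [hz.1], hz.2.le⟩))
    have hsub : Filter.Tendsto (fun x : ℝ => 1 - x) (nhds 1) (nhds 0) := by
      have h := ((continuous_const.sub continuous_id) :
        Continuous (fun x : ℝ => (1:ℝ) - x)).tendsto (1:ℝ)
      simpa [Pi.sub_def] using h
    have t2 : Filter.Tendsto (fun x => dilogR (1 - x)) (nhdsWithin 1 (Set.Ioo (0:ℝ) 1))
        (nhds 0) := by
      have hmap : Filter.Tendsto (fun x : ℝ => 1 - x) (nhdsWithin 1 (Set.Ioo (0:ℝ) 1))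
          (nhdsWithin 0 (Set.Icc (-1:ℝ) 1)) := by
        refine tendsto_nhdsWithin_of_tendsto_nhds_of_eventually_within _
          (hsub.mono_left nhdsWithin_le_nhds) ?_
        filter_upwards [self_mem_nhdsWithin] with z hz
        exact ⟨by linarith [hz.2], by linarith [hz.1]⟩
      have hc := (dilogR_continuousOn 0 (by norm_num)).tendsto
      rw [dilogR_zero] at hc
      exact hc.comp hmap
    have t3 : Filter.Tendsto (fun x => Real.log x * Real.log (1 - x))
        (nhdsWithin 1 (Set.Ioo (0:ℝ) 1)) (nhds 0) := by
      have hg : Filter.Tendsto (fun x : ℝ => 2 * |(1 - x) * Real.log (1 - x)|)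
          (nhdsWithin 1 (Set.Ioo (0:ℝ) 1)) (nhds 0) := by
        have hcont : Filter.Tendsto (fun x : ℝ => (1 - x) * Real.log (1 - x)) (nhds 1)
            (nhds 0) := by
          have h := ((continuous_mul_log.comp ((continuous_const.sub continuous_id) :
            Continuous (fun x : ℝ => (1:ℝ) - x))) :
            Continuous (fun x : ℝ => (1 - x) * Real.log (1 - x))).tendsto (1:ℝ)
          simpa [Function.comp_def] using h
        have h2 := ((hcont.mono_left (nhdsWithin_le_nhds
          (s := Set.Ioo (0:ℝ) 1))).abs).const_mul (2:ℝ)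
        simpa using h2
      refine squeeze_zero_norm' ?_ hg
      have hhalf : ∀ᶠ z in nhdsWithin 1 (Set.Ioo (0:ℝ) 1), (1/2:ℝ) < z :=
        (eventually_gt_nhds (by norm_num : (1/2:ℝ) < 1)).filter_mono nhdsWithin_le_nhds
      filter_upwards [self_mem_nhdsWithin, hhalf] with z hz hz2
      obtain ⟨hz0, hz1⟩ := hz
      have h1z : 0 < 1 - z := by linarith
      have hlogz_np : Real.log z ≤ 0 := Real.log_nonpos hz0.le hz1.le
      have hbound : -Real.log z ≤ 2 * (1 - z) := by
        have h := Real.log_le_sub_one_of_pos (inv_pos.mpr hz0)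
        rw [Real.log_inv] at h
        have : z⁻¹ - 1 ≤ 2 * (1 - z) := by
          rw [inv_eq_one_div, div_sub' hz0.ne']
          rw [div_le_iff₀ hz0]
          nlinarith
        linarith
      rw [Real.norm_eq_abs, abs_mul, abs_of_nonpos hlogz_np]
      have : |Real.log (1 - z)| * (-Real.log z) ≤ |Real.log (1 - z)| * (2 * (1 - z)) :=
        mul_le_mul_of_nonneg_left hbound (abs_nonneg _)
      calc -Real.log z * |Real.log (1 - z)| ≤ 2 * (1 - z) * |Real.log (1 - z)| := by
            linarith [this]
        _ = 2 * |(1 - z) * Real.log (1 - z)| := by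
            rw [abs_mul, abs_of_nonneg h1z.le]; ring
    have := (t1.add t2).add t3
    simpa using this
  have heventually : ψ =ᶠ[nhdsWithin 1 (Set.Ioo (0:ℝ) 1)] fun _ => ψ x := by
    filter_upwards [self_mem_nhdsWithin] with z hz using hconst z hz
  have : Filter.Tendsto (fun _ : ℝ => ψ x) (nhdsWithin 1 (Set.Ioo (0:ℝ) 1))
      (nhds (π ^ 2 / 6)) := hlim.congr' heventually
  exact tendsto_nhds_unique tendsto_const_nhds this


lemma dilogR_half : dilogR (1/2) = π ^ 2 / 12 - (Real.log 2) ^ 2 / 2 := by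
  have h := psi_const (x := 1/2) (by norm_num)
  rw [show (1:ℝ) - 1/2 = 1/2 by norm_num, show Real.log (1/2) = -Real.log 2 by
    rw [one_div, Real.log_inv]] at h
  nlinarith [h]

lemma dilogC_halfR : dilogC (1/2 : ℂ) = ((dilogR (1/2) : ℝ) : ℂ) := by
  rw [dilogR_def]
  simp only
  rw [Complex.ofReal_tsum]
  unfold dilogC
  congr 1
  funext n
  push_cast
  norm_num

-- the half-plane lemma
lemma hasDerivAt_dilog_exp {u : ℂ} (hu : Real.log 2 / (4*π) < u.im) :
    HasDerivAt (fun v => dilogC (Complex.exp (2*(π:ℂ)*Complex.I*v)))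
      (-(2*(π:ℂ)*Complex.I) * Complex.log (1 - Complex.exp (2*(π:ℂ)*Complex.I*u))) u := by
  set c : ℝ := Real.log 2 / (4*π) with hc
  have hc0 : 0 < c := by
    apply div_pos (Real.log_pos one_lt_two)
    positivity
  set r : ℝ := Real.exp (-(2*π*c)) with hrdef
  have hr0 : 0 < r := Real.exp_pos _
  have hr1 : r < 1 := by
    rw [hrdef, Real.exp_lt_one_iff]
    have : 0 < 2*π*c := by positivity
    linarith
  set t : Set ℂ := {z : ℂ | c < z.im} with ht
  have htopen : IsOpen t := isOpen_lt continuous_const Complex.continuous_im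
  have htconv : Convex ℝ t := by
    have hlin : IsLinearMap ℝ Complex.im := ⟨Complex.add_im, fun c x => by
      simp [Complex.smul_im]⟩
    exact convex_halfSpace_gt hlin c
  have hnorm : ∀ z ∈ t, ‖Complex.exp (2*(π:ℂ)*Complex.I*z)‖ ≤ r := by
    intro z hz
    rw [Complex.norm_exp]
    have hre : (2*(π:ℂ)*Complex.I*z).re = -(2*π*z.im) := by
      simp [Complex.mul_re, Complex.mul_im]
    rw [hre, hrdef]
    apply Real.exp_le_exp.mpr
    have : c < z.im := hz
    nlinarith [pi_pos]
  have hut : u ∈ t := hu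
  have key : HasDerivAt (fun v : ℂ => ∑' n : ℕ,
        Complex.exp (2*(π:ℂ)*Complex.I*v) ^ (n+1) / ((n:ℂ)+1)^2)
      (∑' n : ℕ, (2*(π:ℂ)*Complex.I) * Complex.exp (2*(π:ℂ)*Complex.I*u) ^ (n+1) / ((n:ℂ)+1)) u := by
    refine hasDerivAt_tsum_of_isPreconnected
      (u := fun n : ℕ => 2*π*r^(n+1))
      ?_ htopen htconv.isPreconnected
      (g := fun n v => Complex.exp (2*(π:ℂ)*Complex.I*v) ^ (n+1) / ((n:ℂ)+1)^2)
      (g' := fun n v => (2*(π:ℂ)*Complex.I) * Complex.exp (2*(π:ℂ)*Complex.I*v) ^ (n+1) / ((n:ℂ)+1))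
      (fun n v _ => ?_) (fun n v hv => ?_) hut ?_ hut
    · -- summability of bound
      have : Summable (fun n : ℕ => r ^ (n+1)) :=
        (summable_geometric_of_lt_one hr0.le hr1).comp_injective (add_left_injective 1)
      exact this.mul_left (2*π)
    · -- HasDerivAt of each term
      have hE : HasDerivAt (fun v : ℂ => Complex.exp (2*(π:ℂ)*Complex.I*v))
          ((2*(π:ℂ)*Complex.I) * Complex.exp (2*(π:ℂ)*Complex.I*v)) v := by
        have h1 : HasDerivAt (fun v : ℂ => 2*(π:ℂ)*Complex.I*v) (2*(π:ℂ)*Complex.I) v := by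
          simpa using (hasDerivAt_id v).const_mul (2*(π:ℂ)*Complex.I)
        simpa [mul_comm, Function.comp_def] using (Complex.hasDerivAt_exp _).comp v h1
      have hpow := (hE.pow (n+1)).div_const (((n:ℂ)+1)^2)
      have hne : ((n:ℂ)+1) ≠ 0 := Nat.cast_add_one_ne_zero n
      refine hpow.congr_deriv ?_
      push_cast
      rw [pow_succ]
      field_simp
      ring
    · -- bound
      have hEv := hnorm v hv
      rw [norm_div, norm_mul]
      have h2pi : ‖(2*(π:ℂ)*Complex.I)‖ = 2*π := by
        simp [abs_of_nonneg pi_pos.le]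
      have hn1 : ‖((n:ℂ)+1)‖ = (n:ℝ)+1 := by
        rw [show ((n:ℂ)+1) = ((n+1 : ℕ) : ℂ) by push_cast; ring]
        rw [Complex.norm_natCast]
        push_cast; ring
      rw [h2pi, hn1, norm_pow]
      calc 2*π*‖Complex.exp (2*(π:ℂ)*Complex.I*v)‖^(n+1) / ((n:ℝ)+1)
          ≤ 2*π*r^(n+1) / ((n:ℝ)+1) := by
            gcongr
        _ ≤ 2*π*r^(n+1) := div_le_self (by positivity) (by simp)
    · -- summability at u
      refine Summable.of_norm_bounded (g := fun n : ℕ => r^(n+1))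
        ((summable_geometric_of_lt_one hr0.le hr1).comp_injective (add_left_injective 1))
        fun n => ?_
      rw [norm_div, norm_pow]
      have hn1 : ‖(((n:ℂ)+1)^2)‖ = ((n:ℝ)+1)^2 := by
        rw [norm_pow, show ((n:ℂ)+1) = ((n+1 : ℕ) : ℂ) by push_cast; ring, Complex.norm_natCast]
        push_cast; ring
      rw [hn1]
      calc ‖Complex.exp (2*(π:ℂ)*Complex.I*u)‖^(n+1) / ((n:ℝ)+1)^2
          ≤ r^(n+1) / ((n:ℝ)+1)^2 := by gcongr; exact hnorm u hut
        _ ≤ r^(n+1) := div_le_self (by positivity) (by nlinarith [Nat.cast_nonneg (α := ℝ) n])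
  -- identify the sum of derivatives with the log
  have hz1 : ‖Complex.exp (2*(π:ℂ)*Complex.I*u)‖ < 1 := lt_of_le_of_lt (hnorm u hut) hr1
  set z : ℂ := Complex.exp (2*(π:ℂ)*Complex.I*u) with hzdef
  have hlog := Complex.hasSum_taylorSeries_neg_log hz1
  have hshift := (hasSum_nat_add_iff' (f := fun n : ℕ => z^n/(n:ℂ)) 1).mpr hlog
  simp only [Finset.range_one, Finset.sum_singleton, Nat.cast_zero, pow_zero,
    div_zero, sub_zero] at hshift
  have hmul := hshift.mul_left (2*(π:ℂ)*Complex.I)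
  have heq : (fun n : ℕ => (2*(π:ℂ)*Complex.I) * (z^(n+1)/((n+1 : ℕ):ℂ))) =
      fun n : ℕ => (2*(π:ℂ)*Complex.I) * z^(n+1) / ((n:ℂ)+1) := by
    funext n
    push_cast
    ring
  rw [heq] at hmul
  rw [hmul.tsum_eq] at key
  have : (2*(π:ℂ)*Complex.I) * -Complex.log (1 - z) =
      -(2*(π:ℂ)*Complex.I) * Complex.log (1 - z) := by ring
  rw [this] at key
  exact key


lemma dilogC_half : dilogC (1/2 : ℂ) = (((π^2/12 - (Real.log 2)^2/2 : ℝ)) : ℂ) := by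
  rw [← dilogR_half]
  exact dilogC_halfR

/-- The function f(u) = −2π²u²/(k(k+1)) + Li₂(e^{2πiu})/(k(k+1)) has a critical point at
w = i log 2/(2π), with f(w) = π²/(12k(k+1)) and f''(w) = −8π²/(k(k+1)). -/
theorem critical_point_f (k : ℕ) (hk : 1 ≤ k) (f : ℂ → ℂ)
    (hf : f = fun u => -2 * (π : ℂ) ^ 2 * u ^ 2 / ((k : ℂ) * ((k : ℂ) + 1)) +
      dilogC (Complex.exp (2 * (π : ℂ) * Complex.I * u)) / ((k : ℂ) * ((k : ℂ) + 1)))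
    (w : ℂ) (hw : w = Complex.I * (Real.log 2 : ℂ) / (2 * (π : ℂ))) :
    deriv f w = 0 ∧ f w = (π : ℂ) ^ 2 / (12 * (k : ℂ) * ((k : ℂ) + 1)) ∧
      deriv (deriv f) w = -8 * (π : ℂ) ^ 2 / ((k : ℂ) * ((k : ℂ) + 1)) := by
  have hπ0 : (π:ℝ) ≠ 0 := pi_ne_zero
  have hπC : (π:ℂ) ≠ 0 := Complex.ofReal_ne_zero.mpr hπ0
  have hk0 : (k:ℂ) ≠ 0 := Nat.cast_ne_zero.mpr (by omega)
  have hk1 : ((k:ℂ)+1) ≠ 0 := Nat.cast_add_one_ne_zero k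
  set K : ℂ := (k:ℂ) * ((k:ℂ)+1) with hK
  have hKne : K ≠ 0 := mul_ne_zero hk0 hk1
  have hl2 : (0:ℝ) < Real.log 2 := Real.log_pos one_lt_two
  set l : ℂ := Complex.log 2 with hl
  have hcast : ((Real.log 2 : ℝ) : ℂ) = l := by simp [hl]
  have hw' : w = Complex.I * l / (2 * (π:ℂ)) := by rw [hw, hcast]
  -- basic facts about w
  have hwim : w.im = Real.log 2 / (2*π) := by
    rw [hw, show (2*(π:ℂ)) = ((2*π:ℝ):ℂ) by norm_cast, Complex.div_ofReal_im]
    simp [Complex.mul_im, -Complex.ofNat_log, -Complex.natCast_log]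
  have hwt : Real.log 2 / (4*π) < w.im := by
    rw [hwim]
    apply div_lt_div_of_pos_left hl2 (by positivity)
    linarith [pi_pos]
  have harg : 2*(π:ℂ)*Complex.I*w = -l := by
    rw [hw']
    field_simp
    linear_combination l * Complex.I_mul_I
  have hEw : Complex.exp (2*(π:ℂ)*Complex.I*w) = 1/2 := by
    have : -l = ((-Real.log 2 : ℝ) : ℂ) := by push_cast [hcast]; ring
    rw [harg, this, ← Complex.ofReal_exp, Real.exp_neg, Real.exp_log two_pos]
    norm_num
  have hlog12 : Complex.log (1 - Complex.exp (2*(π:ℂ)*Complex.I*w)) = -l := by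
    rw [hEw, show (1:ℂ) - 1/2 = 1/2 by norm_num,
      show ((1:ℂ)/2) = (((1/2:ℝ)) : ℂ) by norm_num,
      ← Complex.ofReal_log (by norm_num : (0:ℝ) ≤ 1/2),
      show Real.log (1/2) = -Real.log 2 by rw [one_div, Real.log_inv]]
    push_cast [hcast]
    ring
  -- the derivative function φ
  set φ : ℂ → ℂ := fun u => (-4*(π:ℂ)^2*u +
      -(2*(π:ℂ)*Complex.I) * Complex.log (1 - Complex.exp (2*(π:ℂ)*Complex.I*u))) / K with hφ
  have Hderiv : ∀ u : ℂ, Real.log 2 / (4*π) < u.im → HasDerivAt f (φ u) u := by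
    intro u hu
    have h1 : HasDerivAt (fun u : ℂ => -2 * (π:ℂ)^2 * u^2 / K)
        ((-2*(π:ℂ)^2) * (2*u) / K) u := by
      have := ((hasDerivAt_pow 2 u).const_mul (-2*(π:ℂ)^2)).div_const K
      refine this.congr_deriv ?_
      push_cast
      ring
    have h2 := (hasDerivAt_dilog_exp hu).div_const K
    have h := h1.add h2
    rw [hf]
    refine h.congr_deriv ?_
    rw [hφ]
    field_simp
    ring
  -- first derivative value
  have hderivw : deriv f w = 0 := by
    rw [(Hderiv w hwt).deriv]
    simp only [hφ]
    rw [hlog12, hw']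
    field_simp
    ring
  -- value of f at w
  have hw2 : w^2 = -(l^2)/(4*(π:ℂ)^2) := by
    have h2 : (2*(π:ℂ)*Complex.I*w)^2 = (-l)^2 := by rw [harg]
    have hsq : (2*(π:ℂ)*Complex.I*w)^2 = -(4*(π:ℂ)^2*w^2) := by
      rw [mul_pow, mul_pow, Complex.I_sq]
      ring
    rw [hsq] at h2
    field_simp
    linear_combination -h2
  have hfw : f w = (π:ℂ)^2 / (12 * (k:ℂ) * ((k:ℂ)+1)) := by
    rw [hf]
    simp only
    rw [hEw, dilogC_half, hw2]
    push_cast [hcast]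
    have hcancel : -2*(π:ℂ)^2 * (-l^2/(4*(π:ℂ)^2)) = l^2/2 := by
      field_simp
      ring
    rw [hcancel, ← add_div, hK]
    have hsum : l^2/2 + ((π:ℂ)^2/12 - l^2/2) = (π:ℂ)^2/12 := by ring
    rw [hsum, div_div, ← mul_assoc]
  -- second derivative
  have hE : HasDerivAt (fun v : ℂ => Complex.exp (2*(π:ℂ)*Complex.I*v))
      ((2*(π:ℂ)*Complex.I) * Complex.exp (2*(π:ℂ)*Complex.I*w)) w := by
    have h1 : HasDerivAt (fun v : ℂ => 2*(π:ℂ)*Complex.I*v) (2*(π:ℂ)*Complex.I) w := by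
      simpa using (hasDerivAt_id w).const_mul (2*(π:ℂ)*Complex.I)
    simpa [mul_comm, Function.comp_def] using (Complex.hasDerivAt_exp _).comp w h1
  have hslit : (1:ℂ) - Complex.exp (2*(π:ℂ)*Complex.I*w) ∈ Complex.slitPlane := by
    rw [hEw]
    refine Or.inl ?_
    norm_num
  have hlogc : HasDerivAt (fun u : ℂ => Complex.log (1 - Complex.exp (2*(π:ℂ)*Complex.I*u)))
      (((1:ℂ) - Complex.exp (2*(π:ℂ)*Complex.I*w))⁻¹ *
        (-((2*(π:ℂ)*Complex.I) * Complex.exp (2*(π:ℂ)*Complex.I*w)))) w :=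
    by simpa [Function.comp_def] using (Complex.hasDerivAt_log hslit).comp w (hE.const_sub 1)
  have hφderiv : HasDerivAt φ ((-4*(π:ℂ)^2*1 +
      -(2*(π:ℂ)*Complex.I) * (((1:ℂ) - Complex.exp (2*(π:ℂ)*Complex.I*w))⁻¹ *
        (-((2*(π:ℂ)*Complex.I) * Complex.exp (2*(π:ℂ)*Complex.I*w))))) / K) w := by
    have h1 : HasDerivAt (fun u : ℂ => -4*(π:ℂ)^2*u) (-4*(π:ℂ)^2*1) w :=
      (hasDerivAt_id w).const_mul _
    exact ((h1.add (hlogc.const_mul (-(2*(π:ℂ)*Complex.I)))).div_const K)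
  have hdd : deriv (deriv f) w = -8 * (π:ℂ)^2 / ((k:ℂ) * ((k:ℂ)+1)) := by
    have heq : deriv f =ᶠ[nhds w] φ := by
      have hopen : IsOpen {u : ℂ | Real.log 2 / (4*π) < u.im} :=
        isOpen_lt continuous_const Complex.continuous_im
      filter_upwards [hopen.mem_nhds hwt] with u hu
      exact (Hderiv u hu).deriv
    rw [heq.deriv_eq, hφderiv.deriv, hEw, hK]
    field_simp
    linear_combination 4 * Complex.I_mul_I
  exact ⟨hderivw, hfw, hdd⟩
end

section
/- For B ≥ 0 fixed and |x| < 1, as ε → 0⁺: Li₂(e^{−Bε}x; e^{−ε}) = (1/ε)·Li₂(x) + (B − 1/2)·log(1−x) + O(ε), uniformly in x on compact subsets of the open unit disk, where Li₂(x;q) := Σ_{m≥1} x^m/(m(1−q^m)) is the quantum dilogarithm and Li₂(x) = Σ_{n≥1} x^n/n². -/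
open Real

set_option maxHeartbeats 1000000

/-- The quantum dilogarithm Li₂(x;q) = Σ_{m≥1} xᵐ/(m(1−qᵐ)). -/
noncomputable def qdilog (x q : ℂ) : ℂ :=
  ∑' m : ℕ, x ^ (m + 1) / (((m : ℂ) + 1) * (1 - q ^ (m + 1)))


lemma taylor2_bound {t : ℝ} (ht : 0 ≤ t) (ht1 : t ≤ 1) :
    |Real.exp (-t) - (1 - t + t^2/2)| ≤ (2/9) * t^3 := by
  have h := Real.exp_bound (x := -t) (by rw [abs_neg, abs_of_nonneg ht]; exact ht1) (n := 3) (by norm_num)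
  simp only [Finset.sum_range_succ, Finset.sum_range_zero, Nat.factorial] at h
  rw [abs_neg, abs_of_nonneg ht] at h
  norm_num at h
  have e : (1 - t + t^2/2 : ℝ) = 1 + -t + t^2/2 := by ring
  rw [e]
  linarith [h]

lemma g_bound (B : ℝ) (hB : 0 ≤ B) : ∃ C : ℝ, 0 < C ∧ ∀ t : ℝ, 0 < t →
    |Real.exp (-(B*t)) / (1 - Real.exp (-t)) - 1/t + (B - 1/2)| ≤ C * t := by
  set t₀ : ℝ := 1/(B+1) with ht₀def
  have hB1 : 0 < B + 1 := by linarith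
  have ht₀ : 0 < t₀ := by positivity
  have ht₀1 : t₀ ≤ 1 := by rw [ht₀def, div_le_one hB1]; linarith
  set C₁ : ℝ := B^2 + 1 + 2*(B+1) with hC₁def
  have hC₁ : 0 < C₁ := by positivity
  set M : ℝ := 1/(1-Real.exp (-t₀)) + 1/t₀ + B + 1/2 with hMdef
  have hEt₀ : Real.exp (-t₀) < 1 := by rw [Real.exp_lt_one_iff]; linarith
  have hM : 0 < M := by
    have : 0 < 1 - Real.exp (-t₀) := by linarith
    positivity
  clear_value C₁ M
  refine ⟨max (4*C₁) (M/t₀) + 1, by positivity, fun t ht => ?_⟩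
  have hE2lt : Real.exp (-t) < 1 := by rw [Real.exp_lt_one_iff]; linarith
  have hE2pos : (0:ℝ) < 1 - Real.exp (-t) := by linarith
  rcases le_or_gt t t₀ with hle | hgt
  · -- small t
    have ht1 : t ≤ 1 := hle.trans ht₀1
    have hBt1 : B * t ≤ 1 := by
      calc B * t ≤ B * t₀ := by nlinarith
        _ ≤ 1 := by rw [ht₀def, mul_one_div, div_le_one hB1]; linarith
    have hr1 : |Real.exp (-(B*t)) - 1 + B*t| ≤ B^2 * t^2 := by
      have h := Real.abs_exp_sub_one_sub_id_le (x := -(B*t))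
        (by rw [abs_neg, abs_of_nonneg (by positivity)]; exact hBt1)
      have e : Real.exp (-(B*t)) - 1 + B*t = Real.exp (-(B*t)) - 1 - (-(B*t)) := by ring
      rw [e]
      calc |Real.exp (-(B*t)) - 1 - (-(B*t))| ≤ (-(B*t))^2 := h
        _ = B^2 * t^2 := by ring
    have hr2 : |Real.exp (-t) - (1 - t + t^2/2)| ≤ (2/9) * t^3 := taylor2_bound ht.le ht1
    have hden : (5/18) * t ≤ 1 - Real.exp (-t) := by
      rw [abs_le] at hr2
      nlinarith [pow_nonneg ht.le 3, sq_nonneg t]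
    set E1 := Real.exp (-(B*t)) with hE1def
    set E2 := Real.exp (-t) with hE2def
    set h : ℝ := t*E1 - (1-E2) + (B-1/2)*t*(1-E2) with hhdef
    clear_value E1 E2 h
    have hB12 : |B - 1/2| ≤ B + 1 := by rw [abs_le]; constructor <;> linarith
    have hhb : |h| ≤ C₁ * t^3 := by
      have e1 : h = t*(E1 - 1 + B*t) + (E2 - (1 - t + t^2/2)) - (B-1/2)*(t^3/2)
          - (B-1/2)*t*(E2 - (1 - t + t^2/2)) := by rw [hhdef]; ring
      have a1 : |t*(E1 - 1 + B*t)| ≤ t*(B^2*t^2) := by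
        rw [abs_mul, abs_of_nonneg ht.le]; gcongr
      have a3 : |(B-1/2)*(t^3/2)| ≤ (B+1)*(t^3/2) := by
        rw [abs_mul, abs_of_nonneg (by positivity : (0:ℝ) ≤ t^3/2)]; gcongr
      have a4 : |(B-1/2)*t*(E2 - (1 - t + t^2/2))| ≤ (B+1)*t*((2/9)*t^3) := by
        rw [abs_mul, abs_mul, abs_of_nonneg ht.le]; gcongr
      have tri : |h| ≤ |t*(E1 - 1 + B*t)| + |E2 - (1 - t + t^2/2)| + |(B-1/2)*(t^3/2)|
          + |(B-1/2)*t*(E2 - (1 - t + t^2/2))| := by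
        rw [e1]
        calc |t*(E1 - 1 + B*t) + (E2 - (1 - t + t^2/2)) - (B-1/2)*(t^3/2)
            - (B-1/2)*t*(E2 - (1 - t + t^2/2))|
            ≤ |t*(E1 - 1 + B*t) + (E2 - (1 - t + t^2/2)) - (B-1/2)*(t^3/2)|
              + |(B-1/2)*t*(E2 - (1 - t + t^2/2))| := abs_sub _ _
          _ ≤ |t*(E1 - 1 + B*t) + (E2 - (1 - t + t^2/2))| + |(B-1/2)*(t^3/2)|
              + |(B-1/2)*t*(E2 - (1 - t + t^2/2))| := by gcongr; exact abs_sub _ _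
          _ ≤ _ := by gcongr; exact abs_add_le _ _
      have : t*(B^2*t^2) + (2/9)*t^3 + (B+1)*(t^3/2) + (B+1)*t*((2/9)*t^3) ≤ C₁ * t^3 := by
        rw [hC₁def]; nlinarith [pow_nonneg ht.le 3, pow_nonneg ht.le 4]
      linarith [tri, a1, a3, a4, hr2, this]
    have hgeq : E1 / (1 - E2) - 1/t + (B - 1/2) = h / (t * (1 - E2)) := by
      rw [hhdef]; field_simp
    rw [hgeq, abs_div, abs_of_pos (by positivity : (0:ℝ) < t * (1 - E2))]
    have hden2 : (5/18) * t^2 ≤ t * (1 - E2) := by nlinarith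
    calc |h| / (t * (1-E2)) ≤ (C₁ * t^3) / ((5/18) * t^2) :=
          div_le_div₀ (mul_nonneg hC₁.le (by positivity)) hhb (by positivity) hden2
      _ = (18/5) * C₁ * t := by rw [div_eq_iff (by positivity : ((5:ℝ)/18) * t^2 ≠ 0)]; ring
      _ ≤ (max (4*C₁) (M/t₀) + 1) * t := by
          have h1 : (18/5) * C₁ ≤ max (4*C₁) (M/t₀) + 1 := by
            have := le_max_left (4*C₁) (M/t₀); linarith
          exact mul_le_mul_of_nonneg_right h1 ht.le
  · -- large t
    have hEmono : Real.exp (-t) ≤ Real.exp (-t₀) := Real.exp_le_exp.2 (by linarith)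
    have hd : 1 - Real.exp (-t₀) ≤ 1 - Real.exp (-t) := by linarith
    have habs : |Real.exp (-(B*t)) / (1 - Real.exp (-t)) - 1/t + (B - 1/2)| ≤ M := by
      have b1 : |Real.exp (-(B*t)) / (1 - Real.exp (-t))| ≤ 1/(1-Real.exp (-t₀)) := by
        rw [abs_div, abs_of_pos hE2pos, abs_of_pos (Real.exp_pos _)]
        exact div_le_div₀ zero_le_one (Real.exp_le_one_iff.2 (by nlinarith)) (by linarith) hd
      have b2 : |1/t| ≤ 1/t₀ := by
        rw [abs_of_pos (by positivity : (0:ℝ) < 1/t)]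
        exact one_div_le_one_div_of_le ht₀ hgt.le
      have b3 : |B - 1/2| ≤ B + 1/2 := by rw [abs_le]; constructor <;> linarith
      calc |Real.exp (-(B*t)) / (1 - Real.exp (-t)) - 1/t + (B - 1/2)|
          ≤ |Real.exp (-(B*t)) / (1 - Real.exp (-t)) - 1/t| + |B - 1/2| := abs_add_le _ _
        _ ≤ |Real.exp (-(B*t)) / (1 - Real.exp (-t))| + |1/t| + |B - 1/2| := by
            gcongr; exact abs_sub _ _
        _ ≤ M := by rw [hMdef]; linarith
    calc |Real.exp (-(B*t)) / (1 - Real.exp (-t)) - 1/t + (B - 1/2)| ≤ M := habs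
      _ = (M/t₀) * t₀ := (div_mul_cancel₀ M ht₀.ne').symm
      _ ≤ (max (4*C₁) (M/t₀) + 1) * t := by
          have h1 : M/t₀ ≤ max (4*C₁) (M/t₀) + 1 := by
            have := le_max_right (4*C₁) (M/t₀); linarith
          exact mul_le_mul h1 hgt.le ht₀.le (by positivity)

/-- As ε → 0⁺, Li₂(e^{−Bε}x; e^{−ε}) = (1/ε) Li₂(x) + (B − 1/2) log(1−x) + O(ε), uniformly
in x on compact subsets of the open unit disk. -/
theorem qdilog_asymptotic (B : ℝ) (hB : 0 ≤ B) (K : Set ℂ) (hK : IsCompact K)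
    (hKd : K ⊆ Metric.ball 0 1) :
    ∃ C ε₀ : ℝ, 0 < C ∧ 0 < ε₀ ∧ ∀ ε : ℝ, 0 < ε → ε < ε₀ → ∀ x ∈ K,
      ‖qdilog (Complex.exp (-((B : ℂ) * (ε : ℂ))) * x) (Complex.exp (-(ε : ℂ))) -
          ((1 / (ε : ℂ)) * dilogC x + ((B : ℂ) - 1 / 2) * Complex.log (1 - x))‖ ≤ C * ε := by
  obtain ⟨C, hC, hCb⟩ := g_bound B hB
  rcases K.eq_empty_or_nonempty with rfl | hKne
  · exact ⟨1, 1, one_pos, one_pos, fun ε _ _ x hx => absurd hx (by simp)⟩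
  obtain ⟨x₀, hx₀K, hx₀max⟩ := hK.exists_isMaxOn hKne continuous_norm.continuousOn
  set r : ℝ := ‖x₀‖ with hrdef
  have hr0 : 0 ≤ r := norm_nonneg _
  have hr1 : r < 1 := by
    have := hKd hx₀K
    rwa [Metric.mem_ball, dist_zero_right] at this
  have hr1' : 0 < 1 - r := by linarith
  refine ⟨C / (1 - r) + 1, 1, by positivity, one_pos, fun ε hε _ x hx => ?_⟩
  have hxr : ‖x‖ ≤ r := hx₀max hx
  have hx1 : ‖x‖ < 1 := lt_of_le_of_lt hxr hr1
  -- the per-term real coefficient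
  set c : ℕ → ℝ := fun n =>
    (1/((n:ℝ)+1)) * (Real.exp (-(B*(ε*((n:ℝ)+1))))/(1 - Real.exp (-(ε*((n:ℝ)+1))))
      - 1/(ε*((n:ℝ)+1)) + (B - 1/2)) with hcdef
  have hcb : ∀ n : ℕ, |c n| ≤ C * ε := by
    intro n
    have hn1 : (0:ℝ) < (n:ℝ)+1 := by positivity
    have ht : 0 < ε*((n:ℝ)+1) := by positivity
    have := hCb (ε*((n:ℝ)+1)) ht
    rw [hcdef]
    simp only [abs_mul]
    rw [abs_of_pos (by positivity : (0:ℝ) < 1/((n:ℝ)+1))]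
    calc 1/((n:ℝ)+1) * |Real.exp (-(B*(ε*((n:ℝ)+1))))/(1 - Real.exp (-(ε*((n:ℝ)+1))))
          - 1/(ε*((n:ℝ)+1)) + (B - 1/2)|
        ≤ 1/((n:ℝ)+1) * (C * (ε*((n:ℝ)+1))) := by gcongr
      _ = C * ε := by field_simp
  -- term functions
  set x' : ℂ := Complex.exp (-((B : ℂ) * (ε : ℂ))) * x with hx'def
  set qterm : ℕ → ℂ := fun n => x' ^ (n+1) / (((n : ℂ) + 1) * (1 - Complex.exp (-(ε:ℂ)) ^ (n+1)))
    with hqtermdef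
  set aterm : ℕ → ℂ := fun n => (1/(ε:ℂ)) * (x ^ (n+1) / ((n : ℂ) + 1) ^ 2) with hatermdef
  set bterm : ℕ → ℂ := fun n => ((B:ℂ) - 1/2) * (x ^ (n+1) / ((n : ℂ) + 1)) with hbtermdef
  set d : ℕ → ℂ := fun n => x ^ (n+1) * ((c n : ℝ) : ℂ) with hddef
  -- coercion identities
  have hq1 : ∀ n : ℕ, Complex.exp (-(ε:ℂ)) ^ (n+1) = ((Real.exp (-(ε*((n:ℝ)+1))) : ℝ) : ℂ) := by
    intro n
    rw [← Complex.exp_nat_mul]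
    have e : ((n+1:ℕ):ℂ) * -(ε:ℂ) = ((-(ε*((n:ℝ)+1)) : ℝ) : ℂ) := by push_cast; ring
    rw [e, ← Complex.ofReal_exp]
  have hq2 : ∀ n : ℕ, x' ^ (n+1) = ((Real.exp (-(B*(ε*((n:ℝ)+1)))) : ℝ) : ℂ) * x ^ (n+1) := by
    intro n
    rw [hx'def, mul_pow, ← Complex.exp_nat_mul]
    have e : ((n+1:ℕ):ℂ) * -((B:ℂ)*(ε:ℂ)) = ((-(B*(ε*((n:ℝ)+1))) : ℝ) : ℂ) := by push_cast; ring
    rw [e, ← Complex.ofReal_exp]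
  -- the key algebraic identity
  have hkey : ∀ n : ℕ, qterm n = d n + (aterm n - bterm n) := by
    intro n
    have hn0 : ((n:ℂ) + 1) ≠ 0 := Nat.cast_add_one_ne_zero n
    have hε0 : (ε:ℂ) ≠ 0 := by exact_mod_cast hε.ne'
    have hεn0 : (ε*((n:ℝ)+1)) ≠ 0 := by positivity
    have hlt : Real.exp (-(ε*((n:ℝ)+1))) < 1 := by
      rw [Real.exp_lt_one_iff]
      have : (0:ℝ) < ε*((n:ℝ)+1) := by positivity
      linarith
    have he0 : (1:ℂ) - ((Real.exp (-(ε*((n:ℝ)+1))) : ℝ) : ℂ) ≠ 0 := by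
      intro h
      have : ((Real.exp (-(ε*((n:ℝ)+1))) : ℝ) : ℂ) = 1 := by linear_combination -h
      rw [← Complex.ofReal_one, Complex.ofReal_inj] at this
      linarith
    rw [hqtermdef, hddef, hatermdef, hbtermdef, hcdef]
    simp only [hq1, hq2]
    set E := Real.exp (-(ε*((n:ℝ)+1))) with hEdef
    set A := Real.exp (-(B*(ε*((n:ℝ)+1)))) with hAdef
    clear_value A E
    push_cast
    simp only [one_div, div_eq_mul_inv, mul_inv, ← inv_pow]
    ring
  -- norm bound on d
  have hdnorm : ∀ n : ℕ, ‖d n‖ ≤ (C * ε) * r ^ n := by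
    intro n
    rw [hddef]
    simp only [norm_mul, Complex.norm_real, norm_pow]
    calc ‖x‖ ^ (n+1) * |c n| ≤ r ^ (n+1) * (C * ε) := by
          gcongr
          exact hcb n
      _ = (C * ε) * (r ^ n * r) := by ring
      _ ≤ (C * ε) * (r ^ n * 1) :=
          mul_le_mul_of_nonneg_left
            (mul_le_mul_of_nonneg_left hr1.le (pow_nonneg hr0 n)) (by positivity)
      _ = (C * ε) * r ^ n := by ring
  have hgeo : Summable (fun n : ℕ => (C * ε) * r ^ n) :=
    (summable_geometric_of_lt_one hr0 hr1).mul_left _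
  have hdsum : Summable d := by
    apply Summable.of_norm_bounded hgeo hdnorm
  -- HasSum for the dilog series
  have hdilog_sum : Summable (fun n : ℕ => x ^ (n+1) / ((n : ℂ) + 1) ^ 2) := by
    apply Summable.of_norm_bounded (summable_geometric_of_lt_one hr0 hr1)
    intro n
    have hn : (1:ℝ) ≤ ‖((n:ℂ) + 1)‖ := by
      rw [show ((n:ℂ)+1) = ((n+1:ℕ):ℂ) by push_cast; ring, Complex.norm_natCast]
      exact_mod_cast Nat.one_le_iff_ne_zero.2 (Nat.succ_ne_zero n)
    rw [norm_div, norm_pow, norm_pow]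
    have h2 : (1:ℝ) ≤ ‖((n:ℂ)+1)‖ ^ 2 := one_le_pow₀ hn
    calc ‖x‖ ^ (n+1) / ‖((n:ℂ)+1)‖ ^ 2 ≤ ‖x‖ ^ (n+1) := div_le_self (by positivity) h2
      _ ≤ r ^ (n+1) := by gcongr
      _ ≤ r ^ n := pow_le_pow_of_le_one hr0 hr1.le (Nat.le_succ n)
  have hA : HasSum aterm ((1/(ε:ℂ)) * dilogC x) := by
    rw [hatermdef]
    exact (hdilog_sum.hasSum).mul_left _
  -- HasSum for the log series
  have hlog0 : HasSum (fun n : ℕ => x ^ n / (n:ℂ)) (-Complex.log (1 - x)) :=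
    Complex.hasSum_taylorSeries_neg_log hx1
  have hlog : HasSum (fun n : ℕ => x ^ (n+1) / ((n:ℂ) + 1)) (-Complex.log (1 - x)) := by
    have h := (hasSum_nat_add_iff' (f := fun n : ℕ => x ^ n / (n:ℂ)) 1).2 hlog0
    simp only [Finset.sum_range_one, pow_zero, Nat.cast_zero, div_zero, sub_zero] at h
    convert h using 2 with n
    · rfl
    push_cast
    ring
  have hB' : HasSum bterm (((B:ℂ) - 1/2) * (-Complex.log (1 - x))) := by
    rw [hbtermdef]
    exact hlog.mul_left _
  -- summability of qterm and HasSum to qdilog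
  have hqsum : Summable qterm := by
    have : qterm = fun n => d n + (aterm n - bterm n) := funext hkey
    rw [this]
    exact hdsum.add ((hA.summable).sub (hB'.summable))
  have hQ : HasSum qterm (qdilog x' (Complex.exp (-(ε:ℂ)))) := by
    rw [qdilog]
    exact hqsum.hasSum
  -- combine
  have hdiff : HasSum d (qdilog x' (Complex.exp (-(ε:ℂ)))
      - ((1/(ε:ℂ)) * dilogC x + ((B:ℂ) - 1/2) * Complex.log (1 - x))) := by
    have h := hQ.sub (hA.sub hB')
    have e1 : (fun n => qterm n - (aterm n - bterm n)) = d := by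
      funext n
      rw [hkey n]
      ring
    rw [e1] at h
    convert h using 1
    · rfl
    ring
  have hnormsum : Summable (fun n => ‖d n‖) :=
    Summable.of_nonneg_of_le (fun n => norm_nonneg _) hdnorm hgeo
  have h1 : ‖qdilog x' (Complex.exp (-(ε:ℂ)))
      - ((1/(ε:ℂ)) * dilogC x + ((B:ℂ) - 1/2) * Complex.log (1 - x))‖ ≤ ∑' n, ‖d n‖ := by
    rw [← hdiff.tsum_eq]
    exact norm_tsum_le_tsum_norm hnormsum
  have h2 : ∑' n, ‖d n‖ ≤ ∑' n : ℕ, (C * ε) * r ^ n := Summable.tsum_le_tsum hdnorm hnormsum hgeo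
  have h3 : ∑' n : ℕ, (C * ε) * r ^ n = (C * ε) * (1 - r)⁻¹ := by
    rw [tsum_mul_left, tsum_geometric_of_lt_one hr0 hr1]
  have h4 : (C * ε) * (1 - r)⁻¹ ≤ (C / (1 - r) + 1) * ε := by
    have : C * (1 - r)⁻¹ = C / (1 - r) := by ring
    nlinarith [div_pos hC hr1']
  calc ‖qdilog x' (Complex.exp (-(ε:ℂ)))
      - ((1/(ε:ℂ)) * dilogC x + ((B:ℂ) - 1/2) * Complex.log (1 - x))‖ ≤ ∑' n, ‖d n‖ := h1
    _ ≤ (C * ε) * (1 - r)⁻¹ := h3 ▸ h2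
    _ ≤ (C / (1 - r) + 1) * ε := h4
end
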